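/- Let d ∈ ℕ, d ≥ 1, let p ∈ ℕ, p ≥ 1, let K ⊆ ℝ^{d+1} be open with (x_K,t_K) ∈ K, let V ∈ C^{max(p−2,0)}(K;ℝ), and let h_K > 0. Write q ∈ ℙ^p in the scaled monomial basis as q(x,t) = Σ_{|j|≤p} C_j ((x−x_K)/h_K)^{j_x} ((t−t_K)/h_K)^{j_t} with complex coefficients C_j. If q ∈ QT^p(K), then for every multi-index j = (j_x, j_t) with |j| ≤ p−2 the coefficients satisfy C_{(j_x+2e_1, j_t)} = 1/((j_{x_1}+1)(j_{x_1}+2)) · ( −2 i h_K (j_t+1) C_{(j_x, j_t+1)} − Σ_{ℓ=2}^d (j_{x_ℓ}+1)(j_{x_ℓ}+2) C_{(j_x+2e_ℓ, j_t)} + 2 Σ_{z ≤ j} (h_K^{|j|−|z|+2}/(j−z)!) D^{j−z}V(x_K,t_K) C_z ), where e_ℓ denotes the ℓ-th canonical basis vector of ℝ^d and z ≤ j means z_{x_i} ≤ j_{x_i} for 1 ≤ i ≤ d and z_t ≤ j_t. -/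

import Mathlib

open scoped BigOperators
open MeasureTheory

noncomputable section

/-- Space–time points `(x, t)` with `x ∈ ℝ^d`, `t ∈ ℝ`. -/
abbrev Pt (d : ℕ) : Type := (Fin d → ℝ) × ℝ

/-- Multi-indices `j = (j_x, j_t)`. -/
abbrev MI (d : ℕ) : Type := (Fin d → ℕ) × ℕ

/-- `|j|`, the total order of a multi-index. -/
def MI.deg {d : ℕ} (j : MI d) : ℕ := (∑ ℓ, j.1 ℓ) + j.2

/-- `j!`. -/
def MI.fact {d : ℕ} (j : MI d) : ℕ := (∏ ℓ, Nat.factorial (j.1 ℓ)) * Nat.factorial j.2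

/-- componentwise difference of multi-indices. -/
def MI.sub {d : ℕ} (j z : MI d) : MI d := (fun ℓ => j.1 ℓ - z.1 ℓ, j.2 - z.2)

/-- add `k` to the spatial component `ℓ` of a multi-index. -/
def MI.addX {d : ℕ} (j : MI d) (ℓ : Fin d) (k : ℕ) : MI d :=
  (fun m => j.1 m + if m = ℓ then k else 0, j.2)

/-- spatial canonical basis vector in `ℝ^d`. -/
def eVecd (d : ℕ) (ℓ : Fin d) : Fin d → ℝ := fun m => if m = ℓ then 1 else 0

/-- spatial unit direction in space–time. -/
def eDir (d : ℕ) (ℓ : Fin d) : Pt d := (eVecd d ℓ, 0)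

/-- time unit direction in space–time. -/
def tDir (d : ℕ) : Pt d := (0, 1)

/-- directional (partial) derivative. -/
def pd {d : ℕ} (v : Pt d) (f : Pt d → ℂ) : Pt d → ℂ := fun z => fderiv ℝ f z v

/-- the multi-index partial derivative `D^j = ∂_{x_1}^{j_1} ⋯ ∂_{x_d}^{j_d} ∂_t^{j_t}`. -/
def Dmi {d : ℕ} (j : MI d) (f : Pt d → ℂ) : Pt d → ℂ :=
  (List.finRange d).foldr (fun ℓ g => (pd (eDir d ℓ))^[j.1 ℓ] g) ((pd (tDir d))^[j.2] f)

/-- the Schrödinger operator `S f = i ∂_t f + ½ Δ_x f − V f`. -/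
def Sop {d : ℕ} (V : Pt d → ℝ) (f : Pt d → ℂ) : Pt d → ℂ := fun z =>
  Complex.I * pd (tDir d) f z
    + (1 / 2) * ∑ ℓ : Fin d, pd (eDir d ℓ) (pd (eDir d ℓ) f) z
    - (V z : ℂ) * f z

/-- all multi-indices with every component `≤ p`. -/
def MIall (d p : ℕ) : Finset (MI d) :=
  (Finset.univ : Finset ((Fin d → Fin (p + 1)) × Fin (p + 1))).image
    (fun j => ((fun ℓ => (j.1 ℓ : ℕ)), (j.2 : ℕ)))

/-- multi-indices with `|j| ≤ p`. -/
def MIle (d p : ℕ) : Finset (MI d) := (MIall d p).filter (fun j => MI.deg j ≤ p)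

/-- multi-indices with `|j| < m`. -/
def MIlt (d m : ℕ) : Finset (MI d) := (MIall d m).filter (fun j => MI.deg j < m)

/-- multi-indices with `|j| = m`. -/
def MIeq (d m : ℕ) : Finset (MI d) := (MIall d m).filter (fun j => MI.deg j = m)

/-- multi-indices `z ≤ j` (componentwise). -/
def MIbelow {d : ℕ} (j : MI d) : Finset (MI d) :=
  (MIall d (MI.deg j)).filter (fun z => (∀ ℓ, z.1 ℓ ≤ j.1 ℓ) ∧ z.2 ≤ j.2)

/-- monomial of multi-index `j`, centered at `c`, scaled by `h`. -/
def monoC {d : ℕ} (c : Pt d) (h : ℝ) (j : MI d) : Pt d → ℂ := fun z =>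
  (∏ ℓ, (((z.1 ℓ - c.1 ℓ) / h : ℝ) : ℂ) ^ j.1 ℓ) * (((z.2 - c.2) / h : ℝ) : ℂ) ^ j.2

/-- `ℙ^p`: polynomial functions `ℝ^{d+1} → ℂ` of total degree `≤ p`. -/
def PolySet (d p : ℕ) : Set (Pt d → ℂ) :=
  {q | ∃ C : MI d → ℂ, ∀ z, q z = ∑ j ∈ MIle d p, C j * monoC ((0 : Fin d → ℝ), (0 : ℝ)) 1 j z}

/-- the quasi-Trefftz space `QT^p(K)` for the potential `V`, centered at `c`:
polynomials of degree `≤ p` with `D^j(Sq)(c) = 0` for all `|j| ≤ p − 2`. -/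
def QTset (d p : ℕ) (V : Pt d → ℝ) (c : Pt d) : Set (Pt d → ℂ) :=
  {q | q ∈ PolySet d p ∧ ∀ j : MI d, MI.deg j + 2 ≤ p → Dmi j (Sop V q) c = 0}

/-- Taylor polynomial of order `m` (degree `m − 1`) centered at `c`. -/
def TaylorP {d : ℕ} (m : ℕ) (c : Pt d) (φ : Pt d → ℂ) : Pt d → ℂ := fun z =>
  ∑ j ∈ MIlt d m, ((MI.fact j : ℂ))⁻¹ * Dmi j φ c * monoC c 1 j z

/-- Euclidean distance on `ℝ^{d+1} = ℝ^d × ℝ`. -/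
def eDist {d : ℕ} (z w : Pt d) : ℝ :=
  Real.sqrt ((∑ ℓ, (z.1 ℓ - w.1 ℓ) ^ 2) + (z.2 - w.2) ^ 2)



section QTAux
variable {d : ℕ}

-- #### auxiliary development ####

variable {d : ℕ}

/-- subtract `k` from the spatial component `ℓ`. -/
def MI.subX {d : ℕ} (j : MI d) (ℓ : Fin d) (k : ℕ) : MI d :=
  (fun m => j.1 m - if m = ℓ then k else 0, j.2)

lemma contDiff_finset_prod {ι : Type*} (s : Finset ι) (f : ι → Pt d → ℂ)
    (h : ∀ i ∈ s, ContDiff ℝ ⊤ (f i)) :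
    ContDiff ℝ ⊤ (fun x => ∏ i ∈ s, f i x) := by
  classical
  induction s using Finset.cons_induction with
  | empty => simpa using contDiff_const
  | cons a s ha ih =>
    simp only [Finset.prod_cons]
    exact (h a (Finset.mem_cons_self a s)).mul
      (ih fun i hi => h i (Finset.mem_cons_of_mem hi))

lemma contDiff_monoC (c : Pt d) (h : ℝ) (j : MI d) : ContDiff ℝ ⊤ (monoC c h j) := by
  unfold monoC
  apply ContDiff.mul
  · refine contDiff_finset_prod _ _ (fun i _ => ?_)
    have h1 : ContDiff ℝ ⊤ (fun x : Pt d => (x.1 i - c.1 i) * h⁻¹) := by fun_prop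
    have h2 : ContDiff ℝ ⊤ (fun x : Pt d => ((x.1 i - c.1 i) / h : ℝ)) := by
      simpa [div_eq_mul_inv] using h1
    exact (Complex.ofRealCLM.contDiff.comp h2).pow _
  · have h1 : ContDiff ℝ ⊤ (fun x : Pt d => (x.2 - c.2) * h⁻¹) := by fun_prop
    have h2 : ContDiff ℝ ⊤ (fun x : Pt d => ((x.2 - c.2) / h : ℝ)) := by
      simpa [div_eq_mul_inv] using h1
    exact (Complex.ofRealCLM.contDiff.comp h2).pow _

lemma differentiable_monoC (c : Pt d) (h : ℝ) (j : MI d) :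
    Differentiable ℝ (monoC c h j) :=
  (contDiff_monoC c h j).differentiable (by simp)

/-- directional derivative along a line. -/
lemma pd_line (f : Pt d → ℂ) (x v : Pt d) (hf : DifferentiableAt ℝ f x) :
    pd v f x = deriv (fun s : ℝ => f (x + s • v)) 0 := by
  have h1 : HasDerivAt (fun s : ℝ => x + s • v) v 0 := by
    simpa using ((hasDerivAt_id (0:ℝ)).smul_const v).const_add x
  have h2 : HasFDerivAt f (fderiv ℝ f x) ((fun s : ℝ => x + s • v) 0) := by
    simpa using hf.hasFDerivAt
  have h3 := h2.comp_hasDerivAt (0:ℝ) h1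
  rw [pd, ← h3.deriv]; rfl

lemma pd_eDir_monoC (c : Pt d) (h : ℝ) (j : MI d) (ℓ : Fin d) :
    pd (eDir d ℓ) (monoC c h j) =
      fun z => (j.1 ℓ : ℂ) * (h : ℂ)⁻¹ * monoC c h (MI.subX j ℓ 1) z := by
  classical
  funext z
  rw [pd_line _ _ _ (differentiable_monoC c h j _)]
  set a : ℝ := z.1 ℓ - c.1 ℓ with ha
  set A : ℂ := ∏ m ∈ Finset.univ.erase ℓ, (((z.1 m - c.1 m) / h : ℝ) : ℂ) ^ j.1 m with hA
  set B : ℂ := (((z.2 - c.2) / h : ℝ) : ℂ) ^ j.2 with hB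
  have hfun : (fun s : ℝ => monoC c h j (z + s • eDir d ℓ))
      = fun s => A * ((((a + s) / h : ℝ) : ℂ) ^ j.1 ℓ) * B := by
    funext s
    have h1 : (z + s • eDir d ℓ).2 = z.2 := by simp [eDir]
    have h2 : ∀ m, (z + s • eDir d ℓ).1 m = z.1 m + s * (if m = ℓ then 1 else 0) := by
      intro m; simp [eDir, eVecd]
    simp only [monoC, h1, h2]
    rw [← Finset.mul_prod_erase Finset.univ _ (Finset.mem_univ ℓ)]
    have h3 : ∏ m ∈ Finset.univ.erase ℓ,
        (((z.1 m + s * (if m = ℓ then 1 else 0) - c.1 m) / h : ℝ) : ℂ) ^ j.1 m = A := by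
      apply Finset.prod_congr rfl
      intro m hm
      have : m ≠ ℓ := (Finset.mem_erase.mp hm).1
      simp [this]
    rw [h3]
    have h4 : z.1 ℓ + s * (if ℓ = ℓ then 1 else 0) - c.1 ℓ = a + s := by simp [ha]; ring
    rw [h4]; ring
  rw [hfun]
  have core : HasDerivAt (fun s : ℝ => ((((a + s) / h : ℝ)) : ℂ) ^ j.1 ℓ)
      ((j.1 ℓ : ℂ) * (((a / h : ℝ) : ℂ)) ^ (j.1 ℓ - 1) * ((1 / h : ℝ) : ℂ)) 0 := by
    have i1 : HasDerivAt (fun s : ℝ => (a + s) / h) (1 / h) 0 := by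
      simpa using (((hasDerivAt_id (0:ℝ)).const_add a).div_const h)
    have i2 := (i1.pow (j.1 ℓ)).ofReal_comp
    simp only [add_zero, Pi.pow_apply] at i2
    have e1 : (fun s : ℝ => ((((a + s) / h) ^ j.1 ℓ : ℝ) : ℂ))
        = fun s : ℝ => ((((a + s) / h : ℝ)) : ℂ) ^ j.1 ℓ := by
      funext s; push_cast; ring
    rw [e1] at i2
    convert i2 using 1
    push_cast; ring
  have full := (core.const_mul A).mul_const B
  rw [full.deriv]
  have hsubX : monoC c h (MI.subX j ℓ 1) z
      = ((((a / h : ℝ)) : ℂ) ^ (j.1 ℓ - 1)) * A * B := by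
    simp only [monoC, MI.subX]
    rw [← Finset.mul_prod_erase Finset.univ _ (Finset.mem_univ ℓ)]
    have h3 : ∏ m ∈ Finset.univ.erase ℓ,
        (((z.1 m - c.1 m) / h : ℝ) : ℂ) ^ (j.1 m - if m = ℓ then 1 else 0) = A := by
      apply Finset.prod_congr rfl
      intro m hm
      have : m ≠ ℓ := (Finset.mem_erase.mp hm).1
      simp [this]
    rw [h3, ← ha]
    simp only [eq_self_iff_true, if_true, if_pos]
    rfl
  rw [hsubX]
  push_cast
  ring

lemma pd_tDir_monoC (c : Pt d) (h : ℝ) (j : MI d) :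
    pd (tDir d) (monoC c h j) =
      fun z => (j.2 : ℂ) * (h : ℂ)⁻¹ * monoC c h (j.1, j.2 - 1) z := by
  classical
  funext z
  rw [pd_line _ _ _ (differentiable_monoC c h j _)]
  set b : ℝ := z.2 - c.2 with hb
  set A : ℂ := ∏ m, (((z.1 m - c.1 m) / h : ℝ) : ℂ) ^ j.1 m with hA
  have hfun : (fun s : ℝ => monoC c h j (z + s • tDir d))
      = fun s => A * ((((b + s) / h : ℝ) : ℂ) ^ j.2) := by
    funext s
    have h1 : (z + s • tDir d).2 = z.2 + s := by simp [tDir]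
    have h2 : ∀ m, (z + s • tDir d).1 m = z.1 m := by intro m; simp [tDir]
    simp only [monoC, h1, h2]
    have h4 : z.2 + s - c.2 = b + s := by rw [hb]; ring
    rw [h4]
  rw [hfun]
  have core : HasDerivAt (fun s : ℝ => ((((b + s) / h : ℝ)) : ℂ) ^ j.2)
      ((j.2 : ℂ) * (((b / h : ℝ) : ℂ)) ^ (j.2 - 1) * ((1 / h : ℝ) : ℂ)) 0 := by
    have i1 : HasDerivAt (fun s : ℝ => (b + s) / h) (1 / h) 0 := by
      simpa using (((hasDerivAt_id (0:ℝ)).const_add b).div_const h)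
    have i2 := (i1.pow j.2).ofReal_comp
    simp only [add_zero, Pi.pow_apply] at i2
    have e1 : (fun s : ℝ => ((((b + s) / h) ^ j.2 : ℝ) : ℂ))
        = fun s : ℝ => ((((b + s) / h : ℝ)) : ℂ) ^ j.2 := by
      funext s; push_cast; ring
    rw [e1] at i2
    convert i2 using 1
    push_cast; ring
  have full := core.const_mul A
  rw [full.deriv]
  have hsub : monoC c h (j.1, j.2 - 1) z = A * (((b / h : ℝ) : ℂ)) ^ (j.2 - 1) := by
    simp only [monoC, hb, hA]
  rw [hsub]
  push_cast
  ring

-- ### chunk 3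
lemma MI.subX_zero (j : MI d) (ℓ : Fin d) : MI.subX j ℓ 0 = j := by
  unfold MI.subX
  ext m
  · simp
  · rfl

lemma MI.subX_subX (j : MI d) (ℓ : Fin d) (a b : ℕ) :
    MI.subX (MI.subX j ℓ a) ℓ b = MI.subX j ℓ (a + b) := by
  unfold MI.subX
  refine Prod.ext (funext fun m => ?_) rfl
  by_cases hm : m = ℓ <;> simp [hm] <;> omega

lemma nat_desc_aux (a n : ℕ) : a * (a - 1).descFactorial n = a.descFactorial (n + 1) := by
  cases a with
  | zero => simp
  | succ a => simpa using (Nat.succ_descFactorial_succ a n).symm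

lemma pd_eDir_sum {ι : Type*} (c : Pt d) (h : ℝ) (s : Finset ι) (b : ι → ℂ) (J : ι → MI d)
    (ℓ : Fin d) :
    pd (eDir d ℓ) (fun z => ∑ i ∈ s, b i * monoC c h (J i) z)
      = fun z => ∑ i ∈ s,
          b i * ((J i).1 ℓ : ℂ) * (h : ℂ)⁻¹ * monoC c h (MI.subX (J i) ℓ 1) z := by
  funext z
  have hdiff : ∀ i ∈ s, DifferentiableAt ℝ (fun w => b i * monoC c h (J i) w) z :=
    fun i _ => ((differentiable_monoC c h (J i)) z).const_mul _
  show fderiv ℝ _ z _ = _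
  rw [fderiv_fun_sum hdiff, ContinuousLinearMap.sum_apply]
  refine Finset.sum_congr rfl fun i _ => ?_
  rw [fderiv_const_mul ((differentiable_monoC c h (J i)) z) (b i)]
  have h2 := congrFun (pd_eDir_monoC c h (J i) ℓ) z
  unfold pd at h2
  simp only [ContinuousLinearMap.smul_apply, smul_eq_mul]
  rw [h2]; ring

lemma pd_tDir_sum {ι : Type*} (c : Pt d) (h : ℝ) (s : Finset ι) (b : ι → ℂ) (J : ι → MI d) :
    pd (tDir d) (fun z => ∑ i ∈ s, b i * monoC c h (J i) z)
      = fun z => ∑ i ∈ s,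
          b i * ((J i).2 : ℂ) * (h : ℂ)⁻¹ * monoC c h ((J i).1, (J i).2 - 1) z := by
  funext z
  have hdiff : ∀ i ∈ s, DifferentiableAt ℝ (fun w => b i * monoC c h (J i) w) z :=
    fun i _ => ((differentiable_monoC c h (J i)) z).const_mul _
  show fderiv ℝ _ z _ = _
  rw [fderiv_fun_sum hdiff, ContinuousLinearMap.sum_apply]
  refine Finset.sum_congr rfl fun i _ => ?_
  rw [fderiv_const_mul ((differentiable_monoC c h (J i)) z) (b i)]
  have h2 := congrFun (pd_tDir_monoC c h (J i)) z
  unfold pd at h2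
  simp only [ContinuousLinearMap.smul_apply, smul_eq_mul]
  rw [h2]; ring

lemma iter_pd_eDir_sum {ι : Type*} (c : Pt d) (h : ℝ) (s : Finset ι) (ℓ : Fin d) (n : ℕ)
    (b : ι → ℂ) (J : ι → MI d) :
    (pd (eDir d ℓ))^[n] (fun z => ∑ i ∈ s, b i * monoC c h (J i) z)
      = fun z => ∑ i ∈ s, b i * (((J i).1 ℓ).descFactorial n : ℂ) * ((h : ℂ)⁻¹) ^ n
          * monoC c h (MI.subX (J i) ℓ n) z := by
  induction n generalizing b J with
  | zero => simp [MI.subX_zero]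
  | succ n ih =>
    rw [Function.iterate_succ_apply, pd_eDir_sum c h s b J ℓ,
      ih (fun i => b i * ((J i).1 ℓ : ℂ) * (h : ℂ)⁻¹) (fun i => MI.subX (J i) ℓ 1)]
    funext z
    refine Finset.sum_congr rfl fun i _ => ?_
    have e1 : (MI.subX (J i) ℓ 1).1 ℓ = (J i).1 ℓ - 1 := by simp [MI.subX]
    rw [e1, MI.subX_subX]
    have e2 : ((J i).1 ℓ : ℂ) * (((J i).1 ℓ - 1).descFactorial n : ℂ)
        = (((J i).1 ℓ).descFactorial (n + 1) : ℂ) := by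
      rw [← nat_desc_aux]; push_cast; ring
    have : (1 : ℕ) + n = n + 1 := by omega
    rw [this]
    rw [← e2]; push_cast; ring

lemma iter_pd_tDir_sum {ι : Type*} (c : Pt d) (h : ℝ) (s : Finset ι) (n : ℕ)
    (b : ι → ℂ) (J : ι → MI d) :
    (pd (tDir d))^[n] (fun z => ∑ i ∈ s, b i * monoC c h (J i) z)
      = fun z => ∑ i ∈ s, b i * (((J i).2).descFactorial n : ℂ) * ((h : ℂ)⁻¹) ^ n
          * monoC c h ((J i).1, (J i).2 - n) z := by
  induction n generalizing b J with
  | zero => simp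
  | succ n ih =>
    rw [Function.iterate_succ_apply, pd_tDir_sum c h s b J,
      ih (fun i => b i * ((J i).2 : ℂ) * (h : ℂ)⁻¹) (fun i => ((J i).1, (J i).2 - 1))]
    funext z
    refine Finset.sum_congr rfl fun i _ => ?_
    have e2 : ((J i).2 : ℂ) * (((J i).2 - 1).descFactorial n : ℂ)
        = (((J i).2).descFactorial (n + 1) : ℂ) := by
      rw [← nat_desc_aux]; push_cast; ring
    have e3 : (J i).2 - 1 - n = (J i).2 - (n + 1) := by omega
    simp only [e3]
    rw [← e2]; push_cast; ring

-- ### chunk 4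
/-- coefficient produced by applying `Dmi k` to `monoC c h j`. -/
def Dcoef (h : ℝ) (k j : MI d) : ℂ :=
  (((∏ ℓ, (j.1 ℓ).descFactorial (k.1 ℓ)) * (j.2).descFactorial k.2 : ℕ) : ℂ)
    * ((h : ℂ)⁻¹) ^ MI.deg k

lemma foldr_pd_sum {ι : Type} (c : Pt d) (h : ℝ) (s : Finset ι) (k : MI d) (L : List (Fin d))
    (hL : L.Nodup) (b : ι → ℂ) (J : ι → MI d) :
    L.foldr (fun ℓ g => (pd (eDir d ℓ))^[k.1 ℓ] g)
        (fun z => ∑ i ∈ s, b i * monoC c h (J i) z)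
      = fun z => ∑ i ∈ s,
          b i * ((∏ ℓ ∈ L.toFinset, ((J i).1 ℓ).descFactorial (k.1 ℓ) : ℕ) : ℂ)
            * ((h : ℂ)⁻¹) ^ (∑ ℓ ∈ L.toFinset, k.1 ℓ)
            * monoC c h (fun m => (J i).1 m - if m ∈ L then k.1 m else 0, (J i).2) z := by
  classical
  induction L generalizing b J with
  | nil =>
    funext z
    refine Finset.sum_congr rfl fun i _ => ?_
    simp
  | cons ℓ L ih =>
    have hnd : L.Nodup := (List.nodup_cons.mp hL).2
    have hnm : ℓ ∉ L := (List.nodup_cons.mp hL).1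
    rw [List.foldr_cons, ih hnd b J, iter_pd_eDir_sum c h s ℓ (k.1 ℓ)
      (fun i => b i * ((∏ ℓ' ∈ L.toFinset, ((J i).1 ℓ').descFactorial (k.1 ℓ') : ℕ) : ℂ)
        * ((h : ℂ)⁻¹) ^ (∑ ℓ' ∈ L.toFinset, k.1 ℓ'))
      (fun i => (fun m => (J i).1 m - if m ∈ L then k.1 m else 0, (J i).2))]
    funext z
    refine Finset.sum_congr rfl fun i _ => ?_
    have hℓF : ℓ ∉ L.toFinset := by simpa using hnm
    have e0 : ((J i).1 ℓ - if ℓ ∈ L then k.1 ℓ else 0) = (J i).1 ℓ := by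
      simp [hnm]
    have e1 : MI.subX (fun m => (J i).1 m - if m ∈ L then k.1 m else 0, (J i).2) ℓ (k.1 ℓ)
        = (fun m => (J i).1 m - if m ∈ ℓ :: L then k.1 m else 0, (J i).2) := by
      unfold MI.subX
      refine Prod.ext (funext fun m => ?_) rfl
      by_cases hm : m = ℓ
      · subst hm
        simp [hnm]
      · simp [hm, List.mem_cons]
    rw [e1]
    simp only [e0, List.toFinset_cons, Finset.prod_insert hℓF, Finset.sum_insert hℓF]
    push_cast
    rw [pow_add]
    ring
  
lemma Dmi_sumForm {ι : Type} (c : Pt d) (h : ℝ) (s : Finset ι) (k : MI d)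
    (b : ι → ℂ) (J : ι → MI d) :
    Dmi k (fun z => ∑ i ∈ s, b i * monoC c h (J i) z)
      = fun z => ∑ i ∈ s, b i * Dcoef h k (J i) * monoC c h (MI.sub (J i) k) z := by
  classical
  unfold Dmi
  rw [iter_pd_tDir_sum c h s k.2 b J,
    foldr_pd_sum c h s k (List.finRange d) (List.nodup_finRange d)
      (fun i => b i * (((J i).2).descFactorial k.2 : ℂ) * ((h : ℂ)⁻¹) ^ k.2)
      (fun i => ((J i).1, (J i).2 - k.2))]
  funext z
  refine Finset.sum_congr rfl fun i _ => ?_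
  have e1 : (fun m => (J i).1 m - if m ∈ List.finRange d then k.1 m else 0, (J i).2 - k.2)
      = MI.sub (J i) k := by
    unfold MI.sub
    refine Prod.ext (funext fun m => ?_) rfl
    simp [List.mem_finRange]
  rw [e1]
  unfold Dcoef MI.deg
  simp only [List.toFinset_finRange]
  push_cast
  rw [pow_add]
  ring

lemma monoC_center (c : Pt d) (h : ℝ) (m : MI d) :
    monoC c h m c = if m = 0 then 1 else 0 := by
  classical
  unfold monoC
  by_cases hm : m = 0
  · simp [hm]
  · rw [if_neg hm]
    by_cases h2 : m.2 = 0
    · have h1 : ¬(m.1 = 0) := fun hh => hm (Prod.ext hh h2)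
      have : ∃ ℓ, m.1 ℓ ≠ 0 := by
        by_contra hc
        push_neg at hc
        exact h1 (funext fun ℓ => hc ℓ)
      obtain ⟨ℓ, hℓ⟩ := this
      have : (((c.1 ℓ - c.1 ℓ) / h : ℝ) : ℂ) ^ m.1 ℓ = 0 := by
        simp [sub_self, zero_pow hℓ]
      rw [Finset.prod_eq_zero (Finset.mem_univ ℓ) this]
      ring
    · have : (((c.2 - c.2) / h : ℝ) : ℂ) ^ m.2 = 0 := by
        simp [sub_self, zero_pow h2]
      rw [this]
      ring

lemma Dcoef_center (c : Pt d) (h : ℝ) (k A : MI d) :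
    Dcoef h k A * monoC c h (MI.sub A k) c
      = if A = k then (MI.fact k : ℂ) * ((h : ℂ)⁻¹) ^ MI.deg k else 0 := by
  classical
  by_cases hAk : A = k
  · subst hAk
    have h1 : MI.sub A A = 0 := by
      unfold MI.sub
      refine Prod.ext (funext fun m => ?_) ?_ <;> simp
    rw [h1, monoC_center, if_pos rfl, if_pos rfl, mul_one]
    unfold Dcoef MI.fact
    congr 2
    simp [Nat.descFactorial_self]
  · rw [if_neg hAk]
    by_cases hle : (∀ ℓ, k.1 ℓ ≤ A.1 ℓ) ∧ k.2 ≤ A.2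
    · have hne : MI.sub A k ≠ 0 := by
        intro hc
        apply hAk
        have h1 := congrFun (congrArg Prod.fst hc)
        have h2 := congrArg Prod.snd hc
        simp [MI.sub] at h1 h2
        refine Prod.ext (funext fun ℓ => ?_) ?_
        · exact le_antisymm (Nat.le_of_sub_eq_zero (h1 ℓ)) (hle.1 ℓ)
        · exact le_antisymm (Nat.le_of_sub_eq_zero h2) hle.2
      rw [monoC_center, if_neg hne, mul_zero]
    · push_neg at hle
      have hz : ((∏ ℓ, (A.1 ℓ).descFactorial (k.1 ℓ)) * (A.2).descFactorial k.2 : ℕ) = 0 := by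
        by_cases hc : ∀ ℓ, k.1 ℓ ≤ A.1 ℓ
        · have h2 : A.2 < k.2 := hle hc
          have : (A.2).descFactorial k.2 = 0 := Nat.descFactorial_eq_zero_iff_lt.mpr h2
          simp [this]
        · push_neg at hc
          obtain ⟨ℓ, hℓ⟩ := hc
          have : (A.1 ℓ).descFactorial (k.1 ℓ) = 0 := Nat.descFactorial_eq_zero_iff_lt.mpr hℓ
          rw [Finset.prod_eq_zero (Finset.mem_univ ℓ) this]
          simp
      unfold Dcoef
      rw [hz]
      simp

-- ### chunk 5 : membership and arithmetic lemmas
lemma mem_MIall {p : ℕ} {k : MI d} :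
    k ∈ MIall d p ↔ (∀ ℓ, k.1 ℓ ≤ p) ∧ k.2 ≤ p := by
  classical
  constructor
  · intro hk
    simp only [MIall, Finset.mem_image] at hk
    obtain ⟨j, -, rfl⟩ := hk
    exact ⟨fun ℓ => Nat.lt_succ_iff.mp (j.1 ℓ).isLt, Nat.lt_succ_iff.mp j.2.isLt⟩
  · rintro ⟨h1, h2⟩
    simp only [MIall, Finset.mem_image]
    refine ⟨⟨fun ℓ => ⟨k.1 ℓ, Nat.lt_succ_of_le (h1 ℓ)⟩, ⟨k.2, Nat.lt_succ_of_le h2⟩⟩,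
      Finset.mem_univ _, ?_⟩
    exact Prod.ext (funext fun ℓ => rfl) rfl

lemma comp_le_deg (k : MI d) (ℓ : Fin d) : k.1 ℓ ≤ MI.deg k := by
  unfold MI.deg
  have := Finset.single_le_sum (f := k.1) (fun i _ => Nat.zero_le _) (Finset.mem_univ ℓ)
  omega

lemma snd_le_deg (k : MI d) : k.2 ≤ MI.deg k := by unfold MI.deg; omega

lemma mem_MIle {p : ℕ} {k : MI d} : k ∈ MIle d p ↔ MI.deg k ≤ p := by
  classical
  unfold MIle
  rw [Finset.mem_filter]
  constructor
  · exact fun h => h.2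
  · intro h
    exact ⟨mem_MIall.mpr ⟨fun ℓ => le_trans (comp_le_deg k ℓ) h,
      le_trans (snd_le_deg k) h⟩, h⟩

lemma deg_mono {z j : MI d} (h1 : ∀ ℓ, z.1 ℓ ≤ j.1 ℓ) (h2 : z.2 ≤ j.2) :
    MI.deg z ≤ MI.deg j := by
  unfold MI.deg
  have := Finset.sum_le_sum (s := Finset.univ) (fun ℓ _ => h1 ℓ)
  omega

lemma mem_MIbelow {z j : MI d} :
    z ∈ MIbelow j ↔ (∀ ℓ, z.1 ℓ ≤ j.1 ℓ) ∧ z.2 ≤ j.2 := by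
  classical
  unfold MIbelow
  rw [Finset.mem_filter]
  constructor
  · exact fun h => h.2
  · intro h
    exact ⟨mem_MIall.mpr ⟨fun ℓ => le_trans (h.1 ℓ) (comp_le_deg j ℓ),
      le_trans h.2 (snd_le_deg j)⟩, h⟩

lemma deg_addX (j : MI d) (ℓ : Fin d) (k : ℕ) :
    MI.deg (MI.addX j ℓ k) = MI.deg j + k := by
  classical
  unfold MI.deg MI.addX
  have : (∑ m, (j.1 m + if m = ℓ then k else 0)) = (∑ m, j.1 m) + k := by
    rw [Finset.sum_add_distrib]
    simp [Finset.sum_ite_eq']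
  simp only [this]
  omega

lemma deg_sub_of_le {z j : MI d} (h1 : ∀ ℓ, z.1 ℓ ≤ j.1 ℓ) (h2 : z.2 ≤ j.2) :
    MI.deg (MI.sub j z) = MI.deg j - MI.deg z := by
  classical
  unfold MI.deg MI.sub
  have hs : (∑ m, (j.1 m - z.1 m)) = (∑ m, j.1 m) - (∑ m, z.1 m) := by
    induction (Finset.univ : Finset (Fin d)) using Finset.cons_induction with
    | empty => simp
    | cons a s ha ih =>
      rw [Finset.sum_cons, Finset.sum_cons, Finset.sum_cons, ih]
      have hz : ∑ m ∈ s, z.1 m ≤ ∑ m ∈ s, j.1 m := Finset.sum_le_sum (fun m _ => h1 m)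
      have := h1 a
      omega
  rw [hs]
  have hz : ∑ m, z.1 m ≤ ∑ m, j.1 m := Finset.sum_le_sum (fun m _ => h1 m)
  omega

lemma MI.fact_pos (j : MI d) : 0 < MI.fact j := by
  unfold MI.fact
  exact Nat.mul_pos (Finset.prod_pos fun ℓ _ => Nat.factorial_pos _) (Nat.factorial_pos _)

/-- multinomial-type coefficient. -/
def mc {d : ℕ} (j z : MI d) : ℕ := (∏ ℓ, (j.1 ℓ).choose (z.1 ℓ)) * (j.2).choose z.2

lemma mc_mul_facts {j z : MI d} (h1 : ∀ ℓ, z.1 ℓ ≤ j.1 ℓ) (h2 : z.2 ≤ j.2) :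
    mc j z * MI.fact z * MI.fact (MI.sub j z) = MI.fact j := by
  classical
  unfold mc MI.fact MI.sub
  simp only
  have : ∀ ℓ ∈ Finset.univ, ((j.1 ℓ).choose (z.1 ℓ) * (z.1 ℓ).factorial) * (j.1 ℓ - z.1 ℓ).factorial
      = (j.1 ℓ).factorial := fun ℓ _ => Nat.choose_mul_factorial_mul_factorial (h1 ℓ)
  calc (∏ ℓ, (j.1 ℓ).choose (z.1 ℓ)) * (j.2).choose z.2 * ((∏ ℓ, (z.1 ℓ).factorial) * (z.2).factorial)
        * ((∏ ℓ, (j.1 ℓ - z.1 ℓ).factorial) * (j.2 - z.2).factorial)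
      = (∏ ℓ, ((j.1 ℓ).choose (z.1 ℓ) * (z.1 ℓ).factorial * (j.1 ℓ - z.1 ℓ).factorial))
        * ((j.2).choose z.2 * (z.2).factorial * (j.2 - z.2).factorial) := by
        simp only [Finset.prod_mul_distrib]
        ring
    _ = (∏ ℓ, (j.1 ℓ).factorial) * (j.2).factorial := by
        rw [Finset.prod_congr rfl this, Nat.choose_mul_factorial_mul_factorial h2]

lemma sub_sub_self_mi {j z : MI d} (h1 : ∀ ℓ, z.1 ℓ ≤ j.1 ℓ) (h2 : z.2 ≤ j.2) :
    MI.sub j (MI.sub j z) = z := by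
  unfold MI.sub
  refine Prod.ext (funext fun ℓ => ?_) ?_
  · exact Nat.sub_sub_self (h1 ℓ)
  · exact Nat.sub_sub_self h2

lemma mc_symm {j z : MI d} (h1 : ∀ ℓ, z.1 ℓ ≤ j.1 ℓ) (h2 : z.2 ≤ j.2) :
    mc j (MI.sub j z) = mc j z := by
  unfold mc MI.sub
  simp only
  congr 1
  · exact Finset.prod_congr rfl fun ℓ _ => Nat.choose_symm (h1 ℓ)
  · exact Nat.choose_symm h2

-- ### chunk 6
lemma foldr_pd_id (F : Pt d → ℂ) (j : MI d) (L : List (Fin d)) (h : ∀ m ∈ L, j.1 m = 0) :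
    L.foldr (fun ℓ g => (pd (eDir d ℓ))^[j.1 ℓ] g) F = F := by
  induction L with
  | nil => rfl
  | cons a L ih =>
    rw [List.foldr_cons, ih (fun m hm => h m (List.mem_cons_of_mem a hm)),
      h a List.mem_cons_self]
    rfl

lemma foldr_pd_congr (F : Pt d → ℂ) (j j' : MI d) (L : List (Fin d))
    (h : ∀ m ∈ L, j.1 m = j'.1 m) :
    L.foldr (fun ℓ g => (pd (eDir d ℓ))^[j.1 ℓ] g) F
      = L.foldr (fun ℓ g => (pd (eDir d ℓ))^[j'.1 ℓ] g) F := by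
  induction L with
  | nil => rfl
  | cons a L ih =>
    rw [List.foldr_cons, List.foldr_cons, ih (fun m hm => h m (List.mem_cons_of_mem a hm)),
      h a List.mem_cons_self]

lemma Dmi_zero_fst (j : MI d) (hj : ∀ m, j.1 m = 0) (f : Pt d → ℂ) :
    Dmi j f = (pd (tDir d))^[j.2] f :=
  foldr_pd_id _ j _ (fun m _ => hj m)

lemma Dmi_zero (j : MI d) (hj1 : ∀ m, j.1 m = 0) (hj2 : j.2 = 0) (f : Pt d → ℂ) :
    Dmi j f = f := by
  rw [Dmi_zero_fst j hj1, hj2]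
  rfl

lemma Dmi_peel_t (j : MI d) (hj : ∀ m, j.1 m = 0) (hj2 : 0 < j.2) (f : Pt d → ℂ) :
    Dmi j f = pd (tDir d) (Dmi (j.1, j.2 - 1) f) := by
  rw [Dmi_zero_fst j hj, Dmi_zero_fst (j.1, j.2 - 1) hj]
  obtain ⟨n, hn⟩ : ∃ n, j.2 = n + 1 := ⟨j.2 - 1, by omega⟩
  rw [hn]
  simp only [Nat.add_sub_cancel]
  exact Function.iterate_succ_apply' (pd (tDir d)) n f

lemma Dmi_push_t (z : MI d) (hz : ∀ m, z.1 m = 0) (f : Pt d → ℂ) :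
    pd (tDir d) (Dmi z f) = Dmi (z.1, z.2 + 1) f := by
  rw [Dmi_peel_t (z.1, z.2 + 1) hz (Nat.succ_pos _)]
  simp only [Nat.add_sub_cancel]

lemma finRange_take_lt {ℓ : Fin d} {m : Fin d} (hm : m ∈ (List.finRange d).take ℓ) : m < ℓ := by
  rw [List.mem_iff_getElem] at hm
  obtain ⟨i, hi, hig⟩ := hm
  have hi' : i < ℓ := by
    have := hi
    simp only [List.length_take, List.length_finRange] at this
    omega
  rw [List.getElem_take] at hig
  have : i < d := lt_of_lt_of_le hi' (le_of_lt ℓ.isLt)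
  rw [List.getElem_finRange] at hig
  rw [← hig]
  simpa [Fin.lt_def] using hi'

lemma finRange_drop_gt {ℓ : Fin d} {m : Fin d} (hm : m ∈ (List.finRange d).drop (ℓ + 1)) :
    ℓ < m := by
  rw [List.mem_iff_getElem] at hm
  obtain ⟨i, hi, hig⟩ := hm
  rw [List.getElem_drop] at hig
  have hdi : (ℓ:ℕ) + 1 + i < d := by
    have := hi
    simp only [List.length_drop, List.length_finRange] at this
    omega
  rw [List.getElem_finRange] at hig
  rw [← hig]
  simp only [Fin.lt_def, Fin.coe_cast]
  omega

lemma finRange_split (ℓ : Fin d) :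
    List.finRange d = (List.finRange d).take ℓ ++ ℓ :: (List.finRange d).drop (ℓ + 1) := by
  have hlen : (ℓ : ℕ) < (List.finRange d).length := by
    rw [List.length_finRange]; exact ℓ.isLt
  conv_lhs => rw [← List.take_append_drop ℓ (List.finRange d)]
  congr 1
  rw [List.drop_eq_getElem_cons hlen]
  congr 1
  rw [List.getElem_finRange]
  apply Fin.ext
  simp

lemma Dmi_peel_x (j : MI d) (ℓ : Fin d) (hlt : ∀ m, m < ℓ → j.1 m = 0) (hpos : 0 < j.1 ℓ)
    (f : Pt d → ℂ) :
    Dmi j f = pd (eDir d ℓ) (Dmi (MI.subX j ℓ 1) f) := by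
  unfold Dmi
  have hsnd : (MI.subX j ℓ 1).2 = j.2 := rfl
  rw [hsnd]
  set F := (pd (tDir d))^[j.2] f with hF
  rw [finRange_split ℓ, List.foldr_append, List.foldr_append, List.foldr_cons, List.foldr_cons]
  have hdropeq :
      ((List.finRange d).drop (ℓ + 1)).foldr
          (fun ℓ' g => (pd (eDir d ℓ'))^[(MI.subX j ℓ 1).1 ℓ'] g) F
        = ((List.finRange d).drop (ℓ + 1)).foldr
          (fun ℓ' g => (pd (eDir d ℓ'))^[j.1 ℓ'] g) F := by
    apply foldr_pd_congr
    intro m hm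
    have : m ≠ ℓ := ne_of_gt (finRange_drop_gt hm)
    simp [MI.subX, this]
  rw [hdropeq]
  set G := ((List.finRange d).drop (ℓ + 1)).foldr
      (fun ℓ' g => (pd (eDir d ℓ'))^[j.1 ℓ'] g) F with hG
  have htake1 : ∀ m ∈ (List.finRange d).take ℓ, j.1 m = 0 :=
    fun m hm => hlt m (finRange_take_lt hm)
  have htake2 : ∀ m ∈ (List.finRange d).take ℓ, (MI.subX j ℓ 1).1 m = 0 := by
    intro m hm
    have hne : m ≠ ℓ := ne_of_lt (finRange_take_lt hm)
    simp [MI.subX, hne, htake1 m hm]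
  rw [foldr_pd_id _ _ _ htake1, foldr_pd_id _ _ _ htake2]
  have hsx : (MI.subX j ℓ 1).1 ℓ = j.1 ℓ - 1 := by simp [MI.subX]
  rw [hsx]
  obtain ⟨n, hn⟩ : ∃ n, j.1 ℓ = n + 1 := ⟨j.1 ℓ - 1, by omega⟩
  rw [hn]
  simp only [Nat.add_sub_cancel]
  exact Function.iterate_succ_apply' (pd (eDir d ℓ)) n G

lemma Dmi_push_x (z : MI d) (ℓ : Fin d) (hlt : ∀ m, m < ℓ → z.1 m = 0) (f : Pt d → ℂ) :
    pd (eDir d ℓ) (Dmi z f) = Dmi (MI.addX z ℓ 1) f := by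
  have h1 : ∀ m, m < ℓ → (MI.addX z ℓ 1).1 m = 0 := by
    intro m hm
    have : m ≠ ℓ := ne_of_lt hm
    simp [MI.addX, this, hlt m hm]
  have h2 : 0 < (MI.addX z ℓ 1).1 ℓ := by simp [MI.addX]
  rw [Dmi_peel_x (MI.addX z ℓ 1) ℓ h1 h2 f]
  have : MI.subX (MI.addX z ℓ 1) ℓ 1 = z := by
    unfold MI.subX MI.addX
    refine Prod.ext (funext fun m => ?_) rfl
    by_cases hm : m = ℓ <;> simp [hm]
  rw [this]

-- pointwise derivative rules
lemma pd_congr_nhds {f g : Pt d → ℂ} {x : Pt d} {v : Pt d} (h : f =ᶠ[nhds x] g) :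
    pd v f x = pd v g x := by
  unfold pd
  rw [h.fderiv_eq]

lemma pd_add_at {f g : Pt d → ℂ} {x v : Pt d} (hf : DifferentiableAt ℝ f x)
    (hg : DifferentiableAt ℝ g x) :
    pd v (fun z => f z + g z) x = pd v f x + pd v g x := by
  unfold pd
  rw [fderiv_fun_add hf hg]
  rfl

lemma pd_const_mul_at {f : Pt d → ℂ} {x v : Pt d} (a : ℂ) (hf : DifferentiableAt ℝ f x) :
    pd v (fun z => a * f z) x = a * pd v f x := by
  unfold pd
  rw [fderiv_const_mul hf a]
  rfl

lemma pd_mul_at {f g : Pt d → ℂ} {x v : Pt d} (hf : DifferentiableAt ℝ f x)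
    (hg : DifferentiableAt ℝ g x) :
    pd v (fun z => f z * g z) x = pd v f x * g x + f x * pd v g x := by
  unfold pd
  rw [fderiv_fun_mul hf hg]
  simp only [ContinuousLinearMap.add_apply, ContinuousLinearMap.smul_apply, smul_eq_mul]
  ring

lemma pd_sum_at {ι : Type*} {s : Finset ι} {F : ι → Pt d → ℂ} {x v : Pt d}
    (h : ∀ i ∈ s, DifferentiableAt ℝ (F i) x) :
    pd v (fun z => ∑ i ∈ s, F i z) x = ∑ i ∈ s, pd v (F i) x := by
  unfold pd
  rw [fderiv_fun_sum h]
  rw [ContinuousLinearMap.sum_apply]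

-- regularity
lemma pd_contDiffOn {U : Set (Pt d)} (hU : IsOpen U) {n : ℕ} {f : Pt d → ℂ}
    (hf : ContDiffOn ℝ (n + 1 : ℕ) f U) (v : Pt d) :
    ContDiffOn ℝ n (pd v f) U := by
  have h1 : ContDiffOn ℝ n (fderiv ℝ f) U := by
    apply hf.fderiv_of_isOpen hU
    norm_cast
  exact h1.clm_apply contDiffOn_const

lemma sum_fst_eq_zero_of_deg {j : MI d} (h : (∑ m, j.1 m) = 0) : ∀ m, j.1 m = 0 := by
  intro m
  have := Finset.sum_eq_zero_iff.mp h
  exact this m (Finset.mem_univ m)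

lemma deg_subX_peel {j : MI d} {ℓ : Fin d} (hpos : 0 < j.1 ℓ) :
    MI.deg (MI.subX j ℓ 1) = MI.deg j - 1 := by
  classical
  show (∑ m, (j.1 m - if m = ℓ then 1 else 0)) + j.2 = (∑ m, j.1 m) + j.2 - 1
  have h1 : (j.1 ℓ - 1) + ∑ m ∈ Finset.univ.erase ℓ, (j.1 m - if m = ℓ then 1 else 0)
      = ∑ m, (j.1 m - if m = ℓ then 1 else 0) := by
    simpa using Finset.add_sum_erase Finset.univ
      (fun m => j.1 m - if m = ℓ then 1 else 0) (Finset.mem_univ ℓ)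
  have h2 : j.1 ℓ + ∑ m ∈ Finset.univ.erase ℓ, j.1 m = ∑ m, j.1 m := by
    simpa using Finset.add_sum_erase Finset.univ j.1 (Finset.mem_univ ℓ)
  have h3 : ∑ m ∈ Finset.univ.erase ℓ, (j.1 m - if m = ℓ then 1 else 0)
      = ∑ m ∈ Finset.univ.erase ℓ, j.1 m := by
    apply Finset.sum_congr rfl
    intro m hm
    simp [(Finset.mem_erase.mp hm).1]
  rw [h3] at h1
  omega

lemma exists_peel (j : MI d) (h : MI.deg j ≠ 0) :
    (∃ ℓ : Fin d, (∀ m, m < ℓ → j.1 m = 0) ∧ 0 < j.1 ℓ) ∨ ((∀ m, j.1 m = 0) ∧ 0 < j.2) := by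
  classical
  by_cases hx : ∀ m, j.1 m = 0
  · right
    refine ⟨hx, ?_⟩
    have : (∑ m, j.1 m) = 0 := Finset.sum_eq_zero (fun m _ => hx m)
    unfold MI.deg at h
    omega
  · left
    push_neg at hx
    have hne : (Finset.univ.filter (fun m => j.1 m ≠ 0)).Nonempty := by
      obtain ⟨m, hm⟩ := hx
      exact ⟨m, by simp [hm]⟩
    set ℓ := (Finset.univ.filter (fun m => j.1 m ≠ 0)).min' hne with hℓ
    have hℓmem : ℓ ∈ Finset.univ.filter (fun m => j.1 m ≠ 0) := Finset.min'_mem _ _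
    refine ⟨ℓ, fun m hm => ?_, ?_⟩
    · by_contra hc
      have : ℓ ≤ m := Finset.min'_le _ m (by simp [hc])
      exact absurd hm (not_lt.mpr this)
    · have := (Finset.mem_filter.mp hℓmem).2
      omega

lemma Dmi_contDiffOn {U : Set (Pt d)} (hU : IsOpen U) {n : ℕ} {f : Pt d → ℂ}
    (hf : ContDiffOn ℝ (n : ℕ) f U) :
    ∀ (N : ℕ) (k : MI d), MI.deg k = N → ∀ (m : ℕ), MI.deg k + m ≤ n →
      ContDiffOn ℝ m (Dmi k f) U := by
  intro N
  induction N with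
  | zero =>
    intro k hdeg m hm
    have h0 : (∑ ℓ, k.1 ℓ) = 0 ∧ k.2 = 0 := by
      unfold MI.deg at hdeg; omega
    rw [Dmi_zero k (sum_fst_eq_zero_of_deg h0.1) h0.2]
    exact hf.of_le (by exact_mod_cast le_trans (by omega : m ≤ n) (le_refl n))
  | succ N ih =>
    intro k hdeg m hm
    rcases exists_peel k (by omega) with ⟨ℓ, hlt, hpos⟩ | ⟨hz, hpos⟩
    · rw [Dmi_peel_x k ℓ hlt hpos f]
      apply pd_contDiffOn hU
      apply ih (MI.subX k ℓ 1) (by rw [deg_subX_peel hpos]; omega) (m + 1)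
      rw [deg_subX_peel hpos]
      omega
    · rw [Dmi_peel_t k hz hpos f]
      apply pd_contDiffOn hU
      apply ih (k.1, k.2 - 1) ?_ (m + 1)
      · have : MI.deg (k.1, k.2 - 1) = MI.deg k - 1 := by
          unfold MI.deg
          simp only
          omega
        rw [this]
        omega
      · have : MI.deg (k.1, k.2 - 1) = MI.deg k - 1 := by
          unfold MI.deg; simp only; omega
        rw [this]; omega

-- ### chunk 7a : Pascal recombination
lemma subX_fst_ne {j : MI d} {ℓ m : Fin d} (h : m ≠ ℓ) (k : ℕ) :
    (MI.subX j ℓ k).1 m = j.1 m := by simp [MI.subX, h]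

lemma subX_fst_self (j : MI d) (ℓ : Fin d) (k : ℕ) :
    (MI.subX j ℓ k).1 ℓ = j.1 ℓ - k := by simp [MI.subX]

lemma addX_fst_ne {j : MI d} {ℓ m : Fin d} (h : m ≠ ℓ) (k : ℕ) :
    (MI.addX j ℓ k).1 m = j.1 m := by simp [MI.addX, h]

lemma addX_fst_self (j : MI d) (ℓ : Fin d) (k : ℕ) :
    (MI.addX j ℓ k).1 ℓ = j.1 ℓ + k := by simp [MI.addX]

lemma subX_addX_cancel (z : MI d) (ℓ : Fin d) (k : ℕ) :
    MI.subX (MI.addX z ℓ k) ℓ k = z := by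
  unfold MI.subX MI.addX
  refine Prod.ext (funext fun m => ?_) rfl
  by_cases hm : m = ℓ <;> simp [hm]

lemma addX_subX_cancel {z : MI d} {ℓ : Fin d} {k : ℕ} (h : k ≤ z.1 ℓ) :
    MI.addX (MI.subX z ℓ k) ℓ k = z := by
  unfold MI.subX MI.addX
  refine Prod.ext (funext fun m => ?_) rfl
  by_cases hm : m = ℓ <;> simp [hm]
  omega

lemma mc_pascal_x {j w : MI d} {ℓ₀ : Fin d} (hpos : 0 < j.1 ℓ₀) (hwpos : 0 < w.1 ℓ₀) :
    mc j w = mc (MI.subX j ℓ₀ 1) (MI.subX w ℓ₀ 1) + mc (MI.subX j ℓ₀ 1) w := by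
  classical
  obtain ⟨a, ha⟩ : ∃ a, j.1 ℓ₀ = a + 1 := ⟨j.1 ℓ₀ - 1, by omega⟩
  obtain ⟨b, hb⟩ : ∃ b, w.1 ℓ₀ = b + 1 := ⟨w.1 ℓ₀ - 1, by omega⟩
  unfold mc
  have hsnd : (MI.subX j ℓ₀ 1).2 = j.2 := rfl
  have hw : ∀ (u v : MI d), (∏ ℓ, (u.1 ℓ).choose (v.1 ℓ))
      = (u.1 ℓ₀).choose (v.1 ℓ₀) * ∏ ℓ ∈ Finset.univ.erase ℓ₀, (u.1 ℓ).choose (v.1 ℓ) :=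
    fun u v => (Finset.mul_prod_erase Finset.univ _ (Finset.mem_univ ℓ₀)).symm
  rw [hw j w, hw (MI.subX j ℓ₀ 1) (MI.subX w ℓ₀ 1), hw (MI.subX j ℓ₀ 1) w]
  have hP1 : ∏ ℓ ∈ Finset.univ.erase ℓ₀, ((MI.subX j ℓ₀ 1).1 ℓ).choose ((MI.subX w ℓ₀ 1).1 ℓ)
      = ∏ ℓ ∈ Finset.univ.erase ℓ₀, (j.1 ℓ).choose (w.1 ℓ) := by
    refine Finset.prod_congr rfl fun m hm => ?_
    have hne : m ≠ ℓ₀ := (Finset.mem_erase.mp hm).1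
    rw [subX_fst_ne hne, subX_fst_ne hne]
  have hP2 : ∏ ℓ ∈ Finset.univ.erase ℓ₀, ((MI.subX j ℓ₀ 1).1 ℓ).choose (w.1 ℓ)
      = ∏ ℓ ∈ Finset.univ.erase ℓ₀, (j.1 ℓ).choose (w.1 ℓ) := by
    refine Finset.prod_congr rfl fun m hm => ?_
    have hne : m ≠ ℓ₀ := (Finset.mem_erase.mp hm).1
    rw [subX_fst_ne hne]
  rw [hP1, hP2, hsnd, subX_fst_self, subX_fst_self, ha, hb]
  have hsw : (MI.subX w ℓ₀ 1).2 = w.2 := rfl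
  rw [hsw]
  simp only [Nat.add_sub_cancel]
  rw [Nat.choose_succ_succ' a b]
  ring

lemma mc_eq_of_zero_x {j w : MI d} {ℓ₀ : Fin d} (hw : w.1 ℓ₀ = 0) :
    mc j w = mc (MI.subX j ℓ₀ 1) w := by
  classical
  unfold mc
  have hsnd : (MI.subX j ℓ₀ 1).2 = j.2 := rfl
  rw [hsnd]
  congr 1
  refine Finset.prod_congr rfl fun m _ => ?_
  by_cases hm : m = ℓ₀
  · subst hm
    rw [hw]
    simp
  · rw [subX_fst_ne hm]

lemma mc_pascal_t {j w : MI d} (hpos : 0 < j.2) (hwpos : 0 < w.2) :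
    mc j w = mc (j.1, j.2 - 1) (w.1, w.2 - 1) + mc (j.1, j.2 - 1) w := by
  obtain ⟨a, ha⟩ : ∃ a, j.2 = a + 1 := ⟨j.2 - 1, by omega⟩
  obtain ⟨b, hb⟩ : ∃ b, w.2 = b + 1 := ⟨w.2 - 1, by omega⟩
  unfold mc
  simp only [ha, hb, Nat.add_sub_cancel]
  rw [Nat.choose_succ_succ' a b]
  ring

lemma mc_eq_of_zero_t {j w : MI d} (hw : w.2 = 0) :
    mc j w = mc (j.1, j.2 - 1) w := by
  unfold mc
  simp [hw]

lemma recombine_x (j : MI d) (ℓ₀ : Fin d) (hpos : 0 < j.1 ℓ₀) (T : MI d → ℂ) :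
    (∑ z ∈ MIbelow (MI.subX j ℓ₀ 1), (mc (MI.subX j ℓ₀ 1) z : ℂ) * T (MI.addX z ℓ₀ 1))
      + (∑ z ∈ MIbelow (MI.subX j ℓ₀ 1), (mc (MI.subX j ℓ₀ 1) z : ℂ) * T z)
    = ∑ w ∈ MIbelow j, (mc j w : ℂ) * T w := by
  classical
  set j' := MI.subX j ℓ₀ 1 with hj'
  -- reindex the first sum
  have hA : (∑ z ∈ MIbelow j', (mc j' z : ℂ) * T (MI.addX z ℓ₀ 1))
      = ∑ w ∈ (MIbelow j).filter (fun w => 0 < w.1 ℓ₀), (mc j' (MI.subX w ℓ₀ 1) : ℂ) * T w := by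
    refine Finset.sum_nbij' (fun z => MI.addX z ℓ₀ 1) (fun w => MI.subX w ℓ₀ 1) ?_ ?_ ?_ ?_ ?_
    · intro z hz
      rw [mem_MIbelow] at hz
      rw [Finset.mem_filter, mem_MIbelow]
      refine ⟨⟨fun m => ?_, hz.2⟩, ?_⟩
      · by_cases hm : m = ℓ₀
        · subst hm
          rw [addX_fst_self]
          have := hz.1 m
          rw [subX_fst_self] at this
          omega
        · rw [addX_fst_ne hm]
          have := hz.1 m
          rwa [subX_fst_ne hm] at this
      · rw [addX_fst_self]; omega
    · intro w hw
      rw [Finset.mem_filter, mem_MIbelow] at hw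
      rw [mem_MIbelow]
      refine ⟨fun m => ?_, hw.1.2⟩
      by_cases hm : m = ℓ₀
      · subst hm
        rw [subX_fst_self, subX_fst_self]
        have := hw.1.1 m
        omega
      · rw [subX_fst_ne hm, subX_fst_ne hm]
        exact hw.1.1 m
    · intro z _; exact subX_addX_cancel z ℓ₀ 1
    · intro w hw
      rw [Finset.mem_filter] at hw
      exact addX_subX_cancel (by omega : 1 ≤ w.1 ℓ₀)
    · intro z _
      rw [subX_addX_cancel]
  rw [hA]
  -- extend the second sum
  have hB : (∑ z ∈ MIbelow j', (mc j' z : ℂ) * T z)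
      = ∑ w ∈ MIbelow j, (mc j' w : ℂ) * T w := by
    apply Finset.sum_subset
    · intro z hz
      rw [mem_MIbelow] at hz ⊢
      refine ⟨fun m => ?_, hz.2⟩
      have := hz.1 m
      by_cases hm : m = ℓ₀
      · subst hm
        rw [subX_fst_self] at this
        omega
      · rwa [subX_fst_ne hm] at this
    · intro w hw hw'
      rw [mem_MIbelow] at hw
      have : j'.1 ℓ₀ < w.1 ℓ₀ := by
        by_contra hc
        apply hw'
        rw [mem_MIbelow]
        refine ⟨fun m => ?_, hw.2⟩
        by_cases hm : m = ℓ₀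
        · subst hm; omega
        · rw [subX_fst_ne hm]; exact hw.1 m
      have hz : mc j' w = 0 := by
        unfold mc
        rw [Finset.prod_eq_zero (Finset.mem_univ ℓ₀) (Nat.choose_eq_zero_of_lt this)]
        simp
      rw [hz]
      simp
  rw [hB]
  -- split by positivity of the ℓ₀ component and apply Pascal
  rw [← Finset.sum_filter_add_sum_filter_not (MIbelow j) (fun w => 0 < w.1 ℓ₀)
      (fun w => (mc j w : ℂ) * T w),
    ← Finset.sum_filter_add_sum_filter_not (MIbelow j) (fun w => 0 < w.1 ℓ₀)
      (fun w => (mc j' w : ℂ) * T w)]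
  have hpos_sum : ∑ w ∈ (MIbelow j).filter (fun w => 0 < w.1 ℓ₀), (mc j w : ℂ) * T w
      = (∑ w ∈ (MIbelow j).filter (fun w => 0 < w.1 ℓ₀), (mc j' (MI.subX w ℓ₀ 1) : ℂ) * T w)
        + ∑ w ∈ (MIbelow j).filter (fun w => 0 < w.1 ℓ₀), (mc j' w : ℂ) * T w := by
    rw [← Finset.sum_add_distrib]
    refine Finset.sum_congr rfl fun w hw => ?_
    rw [Finset.mem_filter] at hw
    have := mc_pascal_x hpos hw.2 (j := j) (w := w)
    rw [this]
    push_cast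
    ring
  have hzero_sum : ∑ w ∈ (MIbelow j).filter (fun w => ¬ 0 < w.1 ℓ₀), (mc j w : ℂ) * T w
      = ∑ w ∈ (MIbelow j).filter (fun w => ¬ 0 < w.1 ℓ₀), (mc j' w : ℂ) * T w := by
    refine Finset.sum_congr rfl fun w hw => ?_
    rw [Finset.mem_filter] at hw
    have hw0 : w.1 ℓ₀ = 0 := by omega
    rw [mc_eq_of_zero_x hw0]
  rw [hpos_sum, hzero_sum]
  ring

lemma recombine_t (j : MI d) (hpos : 0 < j.2) (T : MI d → ℂ) :
    (∑ z ∈ MIbelow (j.1, j.2 - 1), (mc (j.1, j.2 - 1) z : ℂ) * T (z.1, z.2 + 1))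
      + (∑ z ∈ MIbelow (j.1, j.2 - 1), (mc (j.1, j.2 - 1) z : ℂ) * T z)
    = ∑ w ∈ MIbelow j, (mc j w : ℂ) * T w := by
  classical
  set j' : MI d := (j.1, j.2 - 1) with hj'
  have hj2 : j'.2 = j.2 - 1 := rfl
  have hj1 : ∀ m, j'.1 m = j.1 m := fun m => rfl
  have hA : (∑ z ∈ MIbelow j', (mc j' z : ℂ) * T (z.1, z.2 + 1))
      = ∑ w ∈ (MIbelow j).filter (fun w => 0 < w.2), (mc j' (w.1, w.2 - 1) : ℂ) * T w := by
    refine Finset.sum_nbij' (fun z => (z.1, z.2 + 1)) (fun w => (w.1, w.2 - 1)) ?_ ?_ ?_ ?_ ?_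
    · intro z hz
      rw [mem_MIbelow] at hz
      have hz2 : z.2 ≤ j.2 - 1 := hj2 ▸ hz.2
      rw [Finset.mem_filter, mem_MIbelow]
      refine ⟨⟨fun m => hj1 m ▸ hz.1 m, ?_⟩, ?_⟩
      · show z.2 + 1 ≤ j.2
        omega
      · show 0 < z.2 + 1
        omega
    · intro w hw
      rw [Finset.mem_filter, mem_MIbelow] at hw
      rw [mem_MIbelow]
      refine ⟨fun m => (hj1 m).symm ▸ hw.1.1 m, ?_⟩
      show w.2 - 1 ≤ j'.2
      have := hw.1.2
      omega
    · intro z _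
      refine Prod.ext rfl ?_
      show z.2 + 1 - 1 = z.2
      omega
    · intro w hw
      rw [Finset.mem_filter] at hw
      refine Prod.ext rfl ?_
      show w.2 - 1 + 1 = w.2
      have := hw.2
      omega
    · intro z _
      rfl
  rw [hA]
  have hB : (∑ z ∈ MIbelow j', (mc j' z : ℂ) * T z)
      = ∑ w ∈ MIbelow j, (mc j' w : ℂ) * T w := by
    apply Finset.sum_subset
    · intro z hz
      rw [mem_MIbelow] at hz ⊢
      refine ⟨fun m => hj1 m ▸ hz.1 m, ?_⟩
      have := hj2 ▸ hz.2
      omega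
    · intro w hw hw'
      rw [mem_MIbelow] at hw
      have hlt : j'.2 < w.2 := by
        by_contra hc
        exact hw' (mem_MIbelow.mpr ⟨fun m => (hj1 m).symm ▸ hw.1 m, by omega⟩)
      have hz : mc j' w = 0 := by
        unfold mc
        rw [Nat.choose_eq_zero_of_lt hlt]
        simp
      rw [hz]
      simp
  rw [hB]
  rw [← Finset.sum_filter_add_sum_filter_not (MIbelow j) (fun w => 0 < w.2)
      (fun w => (mc j w : ℂ) * T w),
    ← Finset.sum_filter_add_sum_filter_not (MIbelow j) (fun w => 0 < w.2)
      (fun w => (mc j' w : ℂ) * T w)]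
  have hpos_sum : ∑ w ∈ (MIbelow j).filter (fun w => 0 < w.2), (mc j w : ℂ) * T w
      = (∑ w ∈ (MIbelow j).filter (fun w => 0 < w.2), (mc j' (w.1, w.2 - 1) : ℂ) * T w)
        + ∑ w ∈ (MIbelow j).filter (fun w => 0 < w.2), (mc j' w : ℂ) * T w := by
    rw [← Finset.sum_add_distrib]
    refine Finset.sum_congr rfl fun w hw => ?_
    rw [Finset.mem_filter] at hw
    rw [mc_pascal_t hpos hw.2 (j := j) (w := w)]
    push_cast
    ring
  have hzero_sum : ∑ w ∈ (MIbelow j).filter (fun w => ¬ 0 < w.2), (mc j w : ℂ) * T w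
      = ∑ w ∈ (MIbelow j).filter (fun w => ¬ 0 < w.2), (mc j' w : ℂ) * T w := by
    refine Finset.sum_congr rfl fun w hw => ?_
    rw [Finset.mem_filter] at hw
    have hw0 : w.2 = 0 := by omega
    rw [mc_eq_of_zero_t hw0]
  rw [hpos_sum, hzero_sum]
  ring

-- ### chunk 8 : Leibniz
lemma Dmi_diffAt {U : Set (Pt d)} (hU : IsOpen U) {n : ℕ} {f : Pt d → ℂ}
    (hf : ContDiffOn ℝ (n : ℕ) f U) (k : MI d) (hk : MI.deg k + 1 ≤ n)
    {x : Pt d} (hx : x ∈ U) : DifferentiableAt ℝ (Dmi k f) x := by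
  have h := Dmi_contDiffOn hU hf (MI.deg k) k rfl 1 hk
  have h2 : DifferentiableOn ℝ (Dmi k f) U := h.differentiableOn (by simp)
  exact h2.differentiableAt (hU.mem_nhds hx)

lemma addX_sub_of_le (j' z : MI d) (ℓ₀ : Fin d) (hz : ∀ m, z.1 m ≤ j'.1 m) :
    MI.addX (MI.sub j' z) ℓ₀ 1 = MI.sub (MI.addX j' ℓ₀ 1) z := by
  unfold MI.addX MI.sub
  refine Prod.ext (funext fun m => ?_) rfl
  by_cases hm : m = ℓ₀
  · subst hm
    simp only [if_pos rfl]
    have := hz m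
    omega
  · simp [hm]

lemma sub_addX_right (j z : MI d) (ℓ₀ : Fin d) :
    MI.sub j (MI.addX z ℓ₀ 1) = MI.sub (MI.subX j ℓ₀ 1) z := by
  unfold MI.addX MI.sub MI.subX
  refine Prod.ext (funext fun m => ?_) rfl
  by_cases hm : m = ℓ₀
  · subst hm
    simp only [if_pos rfl]
    omega
  · simp [hm]

lemma MIbelow_zero (j : MI d) (hj1 : ∀ m, j.1 m = 0) (hj2 : j.2 = 0) :
    MIbelow j = {j} := by
  ext z
  rw [mem_MIbelow, Finset.mem_singleton]
  constructor
  · rintro ⟨h1, h2⟩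
    refine Prod.ext (funext fun m => ?_) ?_
    · have := h1 m; have := hj1 m; omega
    · omega
  · rintro rfl
    exact ⟨fun m => le_refl _, le_refl _⟩

theorem Dmi_leibniz {U : Set (Pt d)} (hU : IsOpen U) {n : ℕ} {f g : Pt d → ℂ}
    (hf : ContDiffOn ℝ (n : ℕ) f U) (hg : ContDiffOn ℝ (n : ℕ) g U) :
    ∀ (N : ℕ) (j : MI d), MI.deg j = N → MI.deg j ≤ n → ∀ x ∈ U,
      Dmi j (fun z => f z * g z) x
        = ∑ z ∈ MIbelow j, (mc j z : ℂ) * Dmi z f x * Dmi (MI.sub j z) g x := by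
  intro N
  induction N with
  | zero =>
    intro j hdeg hle x hx
    have h0 : (∑ m, j.1 m) = 0 ∧ j.2 = 0 := by unfold MI.deg at hdeg; omega
    have hj1 : ∀ m, j.1 m = 0 := fun m =>
      Finset.sum_eq_zero_iff.mp h0.1 m (Finset.mem_univ m)
    have hsub : MI.sub j j = j := by
      unfold MI.sub
      refine Prod.ext (funext fun m => ?_) ?_ <;> simp [hj1, h0.2]
    rw [Dmi_zero j hj1 h0.2, MIbelow_zero j hj1 h0.2, Finset.sum_singleton, hsub,
      Dmi_zero j hj1 h0.2, Dmi_zero j hj1 h0.2]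
    have : mc j j = 1 := by
      unfold mc
      simp [Nat.choose_self]
    rw [this]
    push_cast
    ring
  | succ N ih =>
    intro j hdeg hle x hx
    have hdiffsummand : ∀ (j' : MI d), MI.deg j' ≤ N → ∀ z ∈ MIbelow j',
        DifferentiableAt ℝ
          (fun y => (mc j' z : ℂ) * Dmi z f y * Dmi (MI.sub j' z) g y) x := by
      intro j' hj'le z hz
      rw [mem_MIbelow] at hz
      have hdz : MI.deg z ≤ N := le_trans (deg_mono hz.1 hz.2) hj'le
      have hdsz : MI.deg (MI.sub j' z) ≤ N := by
        refine le_trans (deg_mono (z := MI.sub j' z) (j := j') (fun m => ?_) ?_) hj'le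
        · exact Nat.sub_le _ _
        · exact Nat.sub_le _ _
      have d1 : DifferentiableAt ℝ (Dmi z f) x := Dmi_diffAt hU hf z (by omega) hx
      have d2 : DifferentiableAt ℝ (Dmi (MI.sub j' z) g) x := Dmi_diffAt hU hg _ (by omega) hx
      exact ((d1.const_mul _).mul d2)
    rcases exists_peel j (by omega) with ⟨ℓ₀, hlt, hpos⟩ | ⟨hz0, hpos⟩
    · -- spatial peel
      have hj'deg : MI.deg (MI.subX j ℓ₀ 1) = N := by rw [deg_subX_peel hpos]; omega
      have hj'le : MI.deg (MI.subX j ℓ₀ 1) ≤ n := by omega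
      have hjlt' : ∀ m, m < ℓ₀ → (MI.subX j ℓ₀ 1).1 m = 0 := by
        intro m hm
        rw [subX_fst_ne (ne_of_lt hm)]
        exact hlt m hm
      have hzlt : ∀ z ∈ MIbelow (MI.subX j ℓ₀ 1), ∀ m, m < ℓ₀ → z.1 m = 0 := by
        intro z hz m hm
        rw [mem_MIbelow] at hz
        have h1 := hz.1 m
        have h2 := hjlt' m hm
        omega
      rw [Dmi_peel_x j ℓ₀ hlt hpos]
      have heq : Dmi (MI.subX j ℓ₀ 1) (fun z => f z * g z)
          =ᶠ[nhds x] (fun y => ∑ z ∈ MIbelow (MI.subX j ℓ₀ 1),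
            (mc (MI.subX j ℓ₀ 1) z : ℂ) * Dmi z f y * Dmi (MI.sub (MI.subX j ℓ₀ 1) z) g y) := by
        filter_upwards [hU.mem_nhds hx] with y hy
        exact ih (MI.subX j ℓ₀ 1) hj'deg hj'le y hy
      rw [pd_congr_nhds heq]
      rw [pd_sum_at (fun z hz => hdiffsummand (MI.subX j ℓ₀ 1) (le_of_eq hj'deg) z hz)]
      have hterm : ∀ z ∈ MIbelow (MI.subX j ℓ₀ 1),
          pd (eDir d ℓ₀) (fun y => (mc (MI.subX j ℓ₀ 1) z : ℂ) * Dmi z f y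
              * Dmi (MI.sub (MI.subX j ℓ₀ 1) z) g y) x
            = (mc (MI.subX j ℓ₀ 1) z : ℂ)
                * (Dmi (MI.addX z ℓ₀ 1) f x * Dmi (MI.sub j (MI.addX z ℓ₀ 1)) g x)
              + (mc (MI.subX j ℓ₀ 1) z : ℂ) * (Dmi z f x * Dmi (MI.sub j z) g x) := by
        intro z hz
        rw [mem_MIbelow] at hz
        have hdz : MI.deg z ≤ N := le_trans (deg_mono hz.1 hz.2) (le_of_eq hj'deg)
        have hdsz : MI.deg (MI.sub (MI.subX j ℓ₀ 1) z) ≤ N := by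
          refine le_trans (deg_mono (z := MI.sub (MI.subX j ℓ₀ 1) z) (j := MI.subX j ℓ₀ 1)
            (fun m => ?_) ?_) (le_of_eq hj'deg)
          · exact Nat.sub_le _ _
          · exact Nat.sub_le _ _
        have d1 : DifferentiableAt ℝ (Dmi z f) x := Dmi_diffAt hU hf z (by omega) hx
        have d2 : DifferentiableAt ℝ (Dmi (MI.sub (MI.subX j ℓ₀ 1) z) g) x :=
          Dmi_diffAt hU hg _ (by omega) hx
        have e1 : pd (eDir d ℓ₀)
            (fun y => (mc (MI.subX j ℓ₀ 1) z : ℂ) * Dmi z f y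
              * Dmi (MI.sub (MI.subX j ℓ₀ 1) z) g y) x
            = pd (eDir d ℓ₀) (fun y => (mc (MI.subX j ℓ₀ 1) z : ℂ) * Dmi z f y) x
                * Dmi (MI.sub (MI.subX j ℓ₀ 1) z) g x
              + ((mc (MI.subX j ℓ₀ 1) z : ℂ) * Dmi z f x)
                * pd (eDir d ℓ₀) (Dmi (MI.sub (MI.subX j ℓ₀ 1) z) g) x :=
          pd_mul_at (d1.const_mul _) d2
        rw [e1, pd_const_mul_at _ d1]
        have hpushf : pd (eDir d ℓ₀) (Dmi z f) x = Dmi (MI.addX z ℓ₀ 1) f x := by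
          rw [Dmi_push_x z ℓ₀ (fun m hm => hzlt z (mem_MIbelow.mpr hz) m hm)]
        have hpushg : pd (eDir d ℓ₀) (Dmi (MI.sub (MI.subX j ℓ₀ 1) z) g) x
            = Dmi (MI.sub j z) g x := by
          have hsublt : ∀ m, m < ℓ₀ → (MI.sub (MI.subX j ℓ₀ 1) z).1 m = 0 := by
            intro m hm
            show (MI.subX j ℓ₀ 1).1 m - z.1 m = 0
            rw [hjlt' m hm]
            omega
          rw [Dmi_push_x _ ℓ₀ hsublt]
          rw [addX_sub_of_le (MI.subX j ℓ₀ 1) z ℓ₀ hz.1]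
          rw [addX_subX_cancel (by omega : 1 ≤ j.1 ℓ₀)]
        have hidx : MI.sub j (MI.addX z ℓ₀ 1) = MI.sub (MI.subX j ℓ₀ 1) z :=
          sub_addX_right j z ℓ₀
        rw [hpushf, hpushg, hidx]
        ring
      rw [Finset.sum_congr rfl hterm, Finset.sum_add_distrib]
      rw [recombine_x j ℓ₀ hpos (fun w => Dmi w f x * Dmi (MI.sub j w) g x)]
      exact Finset.sum_congr rfl fun w _ => by ring
    · -- time peel
      have hj'deg : MI.deg (j.1, j.2 - 1) = N := by
        unfold MI.deg at hdeg ⊢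
        simp only at hdeg ⊢
        omega
      have hj'le : MI.deg (j.1, j.2 - 1) ≤ n := by omega
      have hzlt : ∀ z ∈ MIbelow ((j.1, j.2 - 1) : MI d), ∀ m, z.1 m = 0 := by
        intro z hz m
        rw [mem_MIbelow] at hz
        have h1 := hz.1 m
        have h2 : ((j.1, j.2 - 1) : MI d).1 m = 0 := hz0 m
        omega
      rw [Dmi_peel_t j hz0 hpos]
      have heq : Dmi ((j.1, j.2 - 1) : MI d) (fun z => f z * g z)
          =ᶠ[nhds x] (fun y => ∑ z ∈ MIbelow ((j.1, j.2 - 1) : MI d),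
            (mc (j.1, j.2 - 1) z : ℂ) * Dmi z f y * Dmi (MI.sub (j.1, j.2 - 1) z) g y) := by
        filter_upwards [hU.mem_nhds hx] with y hy
        exact ih (j.1, j.2 - 1) hj'deg hj'le y hy
      rw [pd_congr_nhds heq]
      rw [pd_sum_at (fun z hz => hdiffsummand (j.1, j.2 - 1) (le_of_eq hj'deg) z hz)]
      have hterm : ∀ z ∈ MIbelow ((j.1, j.2 - 1) : MI d),
          pd (tDir d) (fun y => (mc (j.1, j.2 - 1) z : ℂ) * Dmi z f y
              * Dmi (MI.sub (j.1, j.2 - 1) z) g y) x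
            = (mc (j.1, j.2 - 1) z : ℂ)
                * (Dmi (z.1, z.2 + 1) f x * Dmi (MI.sub j (z.1, z.2 + 1)) g x)
              + (mc (j.1, j.2 - 1) z : ℂ) * (Dmi z f x * Dmi (MI.sub j z) g x) := by
        intro z hz
        have hzmem := hz
        rw [mem_MIbelow] at hz
        have hdz : MI.deg z ≤ N := le_trans (deg_mono hz.1 hz.2) (le_of_eq hj'deg)
        have hdsz : MI.deg (MI.sub (j.1, j.2 - 1) z) ≤ N := by
          refine le_trans (deg_mono (z := MI.sub (j.1, j.2 - 1) z) (j := (j.1, j.2 - 1))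
            (fun m => ?_) ?_) (le_of_eq hj'deg)
          · exact Nat.sub_le _ _
          · exact Nat.sub_le _ _
        have d1 : DifferentiableAt ℝ (Dmi z f) x := Dmi_diffAt hU hf z (by omega) hx
        have d2 : DifferentiableAt ℝ (Dmi (MI.sub (j.1, j.2 - 1) z) g) x :=
          Dmi_diffAt hU hg _ (by omega) hx
        have e1 : pd (tDir d)
            (fun y => (mc (j.1, j.2 - 1) z : ℂ) * Dmi z f y
              * Dmi (MI.sub (j.1, j.2 - 1) z) g y) x
            = pd (tDir d) (fun y => (mc (j.1, j.2 - 1) z : ℂ) * Dmi z f y) x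
                * Dmi (MI.sub (j.1, j.2 - 1) z) g x
              + ((mc (j.1, j.2 - 1) z : ℂ) * Dmi z f x)
                * pd (tDir d) (Dmi (MI.sub (j.1, j.2 - 1) z) g) x :=
          pd_mul_at (d1.const_mul _) d2
        rw [e1, pd_const_mul_at _ d1]
        have hpushf : pd (tDir d) (Dmi z f) x = Dmi (z.1, z.2 + 1) f x := by
          rw [Dmi_push_t z (hzlt z hzmem)]
        have hpushg : pd (tDir d) (Dmi (MI.sub (j.1, j.2 - 1) z) g) x
            = Dmi (MI.sub j z) g x := by
          have hsublt : ∀ m, (MI.sub (j.1, j.2 - 1) z).1 m = 0 := by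
            intro m
            show j.1 m - z.1 m = 0
            rw [hz0 m]
            omega
          rw [Dmi_push_t _ hsublt]
          have : ((MI.sub ((j.1, j.2 - 1) : MI d) z).1, (MI.sub ((j.1, j.2 - 1) : MI d) z).2 + 1)
              = MI.sub j z := by
            unfold MI.sub
            refine Prod.ext rfl ?_
            show j.2 - 1 - z.2 + 1 = j.2 - z.2
            have h2 : z.2 ≤ j.2 - 1 := hz.2
            omega
          rw [this]
        have hidx : MI.sub j (z.1, z.2 + 1) = MI.sub (j.1, j.2 - 1) z := by
          unfold MI.sub
          refine Prod.ext rfl ?_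
          show j.2 - (z.2 + 1) = j.2 - 1 - z.2
          omega
        rw [hpushf, hpushg, hidx]
        ring
      rw [Finset.sum_congr rfl hterm, Finset.sum_add_distrib]
      rw [recombine_t j hpos (fun w => Dmi w f x * Dmi (MI.sub j w) g x)]
      exact Finset.sum_congr rfl fun w _ => by ring

-- ### chunk 9
lemma contDiff_pd_top {f : Pt d → ℂ} (hf : ContDiff ℝ ⊤ f) (v : Pt d) :
    ContDiff ℝ ⊤ (pd v f) := by
  have h1 : ContDiff ℝ ⊤ (fderiv ℝ f) := hf.fderiv_right (m := ⊤) le_top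
  exact h1.clm_apply contDiff_const

lemma pd_lin_at {f g : Pt d → ℂ} {x v : Pt d} (a b : ℂ) (hf : DifferentiableAt ℝ f x)
    (hg : DifferentiableAt ℝ g x) :
    pd v (fun z => a * f z + b * g z) x = a * pd v f x + b * pd v g x := by
  unfold pd
  rw [fderiv_fun_add ((hf.const_mul a) : DifferentiableAt ℝ (fun z => a * f z) x)
    ((hg.const_mul b) : DifferentiableAt ℝ (fun z => b * g z) x),
    fderiv_const_mul hf a, fderiv_const_mul hg b]
  simp only [ContinuousLinearMap.add_apply, ContinuousLinearMap.smul_apply, smul_eq_mul]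

lemma Dmi_linear_on {U : Set (Pt d)} (hU : IsOpen U) {n : ℕ} {f g : Pt d → ℂ} (a b : ℂ)
    (hf : ContDiffOn ℝ (n : ℕ) f U) (hg : ContDiffOn ℝ (n : ℕ) g U) :
    ∀ (N : ℕ) (j : MI d), MI.deg j = N → MI.deg j ≤ n → ∀ x ∈ U,
      Dmi j (fun z => a * f z + b * g z) x = a * Dmi j f x + b * Dmi j g x := by
  intro N
  induction N with
  | zero =>
    intro j hdeg hle x hx
    have h0 : (∑ m, j.1 m) = 0 ∧ j.2 = 0 := by unfold MI.deg at hdeg; omega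
    have hj1 : ∀ m, j.1 m = 0 := fun m =>
      Finset.sum_eq_zero_iff.mp h0.1 m (Finset.mem_univ m)
    rw [Dmi_zero j hj1 h0.2, Dmi_zero j hj1 h0.2, Dmi_zero j hj1 h0.2]
  | succ N ih =>
    intro j hdeg hle x hx
    rcases exists_peel j (by omega) with ⟨ℓ₀, hlt, hpos⟩ | ⟨hz0, hpos⟩
    · have hj'deg : MI.deg (MI.subX j ℓ₀ 1) = N := by rw [deg_subX_peel hpos]; omega
      have hj'le : MI.deg (MI.subX j ℓ₀ 1) ≤ n := by omega
      have hjlt' : ∀ m, m < ℓ₀ → (MI.subX j ℓ₀ 1).1 m = 0 := by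
        intro m hm
        rw [subX_fst_ne (ne_of_lt hm)]
        exact hlt m hm
      rw [Dmi_peel_x j ℓ₀ hlt hpos]
      have heq : Dmi (MI.subX j ℓ₀ 1) (fun z => a * f z + b * g z)
          =ᶠ[nhds x] (fun y => a * Dmi (MI.subX j ℓ₀ 1) f y + b * Dmi (MI.subX j ℓ₀ 1) g y) := by
        filter_upwards [hU.mem_nhds hx] with y hy
        exact ih (MI.subX j ℓ₀ 1) hj'deg hj'le y hy
      rw [pd_congr_nhds heq,
        pd_lin_at a b (Dmi_diffAt hU hf _ (by omega) hx) (Dmi_diffAt hU hg _ (by omega) hx),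
        Dmi_push_x _ ℓ₀ hjlt' f, Dmi_push_x _ ℓ₀ hjlt' g,
        addX_subX_cancel (by omega : 1 ≤ j.1 ℓ₀)]
    · have hj'deg : MI.deg ((j.1, j.2 - 1) : MI d) = N := by
        unfold MI.deg at hdeg ⊢
        simp only at hdeg ⊢
        omega
      have hj'le : MI.deg ((j.1, j.2 - 1) : MI d) ≤ n := by omega
      rw [Dmi_peel_t j hz0 hpos]
      have heq : Dmi ((j.1, j.2 - 1) : MI d) (fun z => a * f z + b * g z)
          =ᶠ[nhds x] (fun y => a * Dmi ((j.1, j.2 - 1) : MI d) f y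
            + b * Dmi ((j.1, j.2 - 1) : MI d) g y) := by
        filter_upwards [hU.mem_nhds hx] with y hy
        exact ih (j.1, j.2 - 1) hj'deg hj'le y hy
      rw [pd_congr_nhds heq,
        pd_lin_at a b (Dmi_diffAt hU hf _ (by omega) hx) (Dmi_diffAt hU hg _ (by omega) hx),
        Dmi_push_t ((j.1, j.2 - 1) : MI d) (fun m => hz0 m) f,
        Dmi_push_t ((j.1, j.2 - 1) : MI d) (fun m => hz0 m) g]
      have hj : ((((j.1, j.2 - 1) : MI d)).1, (((j.1, j.2 - 1) : MI d)).2 + 1) = j :=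
        Prod.ext rfl (by show j.2 - 1 + 1 = j.2; omega)
      rw [hj]

lemma pd_zero_fun (v : Pt d) : pd v (fun _ : Pt d => (0:ℂ)) = fun _ => 0 := by
  funext x
  unfold pd
  simp [fderiv_const]

lemma iter_pd_zero (v : Pt d) (n : ℕ) : (pd v)^[n] (fun _ : Pt d => (0:ℂ)) = fun _ => 0 := by
  induction n with
  | zero => rfl
  | succ n ih => rw [Function.iterate_succ_apply, pd_zero_fun, ih]

lemma Dmi_zero_fun (j : MI d) : Dmi j (fun _ : Pt d => (0:ℂ)) = fun _ => 0 := by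
  unfold Dmi
  rw [iter_pd_zero]
  induction (List.finRange d) with
  | nil => rfl
  | cons a L ih => rw [List.foldr_cons, ih, iter_pd_zero]

lemma Dmi_finsum_on {U : Set (Pt d)} (hU : IsOpen U) {n : ℕ} {ι : Type}
    (s : Finset ι) (F : ι → Pt d → ℂ) (hF : ∀ i ∈ s, ContDiffOn ℝ (n : ℕ) (F i) U)
    (j : MI d) (hj : MI.deg j ≤ n) (x : Pt d) (hx : x ∈ U) :
    Dmi j (fun z => ∑ i ∈ s, F i z) x = ∑ i ∈ s, Dmi j (F i) x := by
  classical
  induction s using Finset.cons_induction with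
  | empty =>
    simp only [Finset.sum_empty]
    rw [Dmi_zero_fun]
  | cons a s ha ih =>
    have h1 : (fun z => ∑ i ∈ Finset.cons a s ha, F i z)
        = fun z => (1:ℂ) * F a z + (1:ℂ) * (fun y => ∑ i ∈ s, F i y) z := by
      funext z
      rw [Finset.sum_cons]
      ring
    rw [h1, Dmi_linear_on hU 1 1 (hF a (Finset.mem_cons_self a s))
      (ContDiffOn.sum (fun i hi => hF i (Finset.mem_cons_of_mem hi))) (MI.deg j) j rfl hj x hx,
      ih (fun i hi => hF i (Finset.mem_cons_of_mem hi)), Finset.sum_cons]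
    ring

-- ### chunk 10
lemma Dmi_rep_center (c : Pt d) (h : ℝ) {p : ℕ} (C : MI d → ℂ) (k : MI d)
    (hk : MI.deg k ≤ p) :
    Dmi k (fun z => ∑ j ∈ MIle d p, C j * monoC c h j z) c
      = C k * (MI.fact k : ℂ) * ((h : ℂ)⁻¹) ^ MI.deg k := by
  classical
  rw [Dmi_sumForm c h (MIle d p) k C (fun j => j)]
  have hterm : ∀ j ∈ MIle d p,
      C j * Dcoef h k j * monoC c h (MI.sub j k) c
        = C j * (if j = k then (MI.fact k : ℂ) * ((h : ℂ)⁻¹) ^ MI.deg k else 0) := by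
    intro j _
    rw [mul_assoc, Dcoef_center]
  beta_reduce
  rw [Finset.sum_congr rfl hterm]
  rw [Finset.sum_eq_single k]
  · rw [if_pos rfl]; ring
  · intro b _ hb
    rw [if_neg hb, mul_zero]
  · intro hk'
    exact absurd (mem_MIle.mpr hk) hk'

lemma Dmi_pdt (j : MI d) (f : Pt d → ℂ) :
    Dmi j (pd (tDir d) f) = Dmi (j.1, j.2 + 1) f := by
  unfold Dmi
  rw [← Function.iterate_succ_apply]

lemma fact_t_succ (j : MI d) : MI.fact (j.1, j.2 + 1) = MI.fact j * (j.2 + 1) := by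
  unfold MI.fact
  show (∏ ℓ, Nat.factorial (j.1 ℓ)) * Nat.factorial (j.2 + 1) = _
  rw [Nat.factorial_succ]
  ring

lemma deg_t_succ (j : MI d) : MI.deg (j.1, j.2 + 1) = MI.deg j + 1 := by
  unfold MI.deg
  show (∑ ℓ, j.1 ℓ) + (j.2 + 1) = _
  omega

lemma fact_addX2 (j : MI d) (ℓ : Fin d) :
    MI.fact (MI.addX j ℓ 2) = MI.fact j * ((j.1 ℓ + 1) * (j.1 ℓ + 2)) := by
  classical
  unfold MI.fact
  have h1 : (∏ m, Nat.factorial ((MI.addX j ℓ 2).1 m))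
      = Nat.factorial (j.1 ℓ + 2) * ∏ m ∈ Finset.univ.erase ℓ, Nat.factorial (j.1 m) := by
    rw [← Finset.mul_prod_erase Finset.univ _ (Finset.mem_univ ℓ)]
    congr 1
    · rw [addX_fst_self]
    · refine Finset.prod_congr rfl fun m hm => ?_
      have : m ≠ ℓ := (Finset.mem_erase.mp hm).1
      simp [MI.addX, this]
  have h2 : (∏ m, Nat.factorial (j.1 m))
      = Nat.factorial (j.1 ℓ) * ∏ m ∈ Finset.univ.erase ℓ, Nat.factorial (j.1 m) :=
    (Finset.mul_prod_erase Finset.univ _ (Finset.mem_univ ℓ)).symm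
  have hsnd : (MI.addX j ℓ 2).2 = j.2 := rfl
  rw [h1, h2, hsnd]
  have : Nat.factorial (j.1 ℓ + 2) = Nat.factorial (j.1 ℓ) * ((j.1 ℓ + 1) * (j.1 ℓ + 2)) := by
    rw [Nat.factorial_succ, Nat.factorial_succ]
    ring
  rw [this]
  ring

lemma Dmi_pdt_center (c : Pt d) (h : ℝ) {p : ℕ} (C : MI d → ℂ) (j : MI d)
    (hdeg : MI.deg j + 1 ≤ p) :
    Dmi j (pd (tDir d) (fun z => ∑ k ∈ MIle d p, C k * monoC c h k z)) c
      = C (j.1, j.2 + 1) * ((j.2 + 1 : ℕ) : ℂ) * (MI.fact j : ℂ)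
          * ((h : ℂ)⁻¹) ^ (MI.deg j + 1) := by
  rw [Dmi_pdt, Dmi_rep_center c h C (j.1, j.2 + 1) (by rw [deg_t_succ]; omega)]
  rw [fact_t_succ, deg_t_succ]
  push_cast
  ring

lemma Dmi_pdpd_center (c : Pt d) (h : ℝ) {p : ℕ} (C : MI d → ℂ) (j : MI d) (ℓ : Fin d)
    (hdeg : MI.deg j + 2 ≤ p) :
    Dmi j (pd (eDir d ℓ) (pd (eDir d ℓ) (fun z => ∑ k ∈ MIle d p, C k * monoC c h k z))) c
      = C (MI.addX j ℓ 2) * (((j.1 ℓ + 1) * (j.1 ℓ + 2) : ℕ) : ℂ) * (MI.fact j : ℂ)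
          * ((h : ℂ)⁻¹) ^ (MI.deg j + 2) := by
  classical
  rw [pd_eDir_sum c h (MIle d p) C (fun k => k) ℓ,
    pd_eDir_sum c h (MIle d p) (fun k => C k * (k.1 ℓ : ℂ) * (h : ℂ)⁻¹)
      (fun k => MI.subX k ℓ 1) ℓ]
  have hre : (fun z => ∑ k ∈ MIle d p,
      C k * (k.1 ℓ : ℂ) * (h : ℂ)⁻¹ * ((MI.subX k ℓ 1).1 ℓ : ℂ) * (h : ℂ)⁻¹
        * monoC c h (MI.subX (MI.subX k ℓ 1) ℓ 1) z)
      = fun z => ∑ k ∈ MIle d p,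
        (C k * (k.1 ℓ : ℂ) * (h : ℂ)⁻¹ * ((MI.subX k ℓ 1).1 ℓ : ℂ) * (h : ℂ)⁻¹)
          * monoC c h (MI.subX k ℓ 2) z := by
    funext z
    refine Finset.sum_congr rfl fun k _ => ?_
    rw [MI.subX_subX]
  rw [hre, Dmi_sumForm c h (MIle d p) j
    (fun k => C k * (k.1 ℓ : ℂ) * (h : ℂ)⁻¹ * ((MI.subX k ℓ 1).1 ℓ : ℂ) * (h : ℂ)⁻¹)
    (fun k => MI.subX k ℓ 2)]
  have hterm : ∀ k ∈ MIle d p,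
      C k * (k.1 ℓ : ℂ) * (h : ℂ)⁻¹ * ((MI.subX k ℓ 1).1 ℓ : ℂ) * (h : ℂ)⁻¹
          * Dcoef h j (MI.subX k ℓ 2) * monoC c h (MI.sub (MI.subX k ℓ 2) j) c
        = C k * (k.1 ℓ : ℂ) * (h : ℂ)⁻¹ * ((k.1 ℓ - 1 : ℕ) : ℂ) * (h : ℂ)⁻¹
          * (if MI.subX k ℓ 2 = j then (MI.fact j : ℂ) * ((h : ℂ)⁻¹) ^ MI.deg j else 0) := by
    intro k _
    rw [mul_assoc, Dcoef_center, subX_fst_self]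
  beta_reduce
  rw [Finset.sum_congr rfl hterm]
  rw [Finset.sum_eq_single (MI.addX j ℓ 2)]
  · rw [if_pos (subX_addX_cancel j ℓ 2), addX_fst_self]
    have h1 : (j.1 ℓ + 2 - 1 : ℕ) = j.1 ℓ + 1 := by omega
    rw [h1]
    push_cast
    ring
  · intro k _ hk
    by_cases hif : MI.subX k ℓ 2 = j
    · rw [if_pos hif]
      by_cases h2 : 2 ≤ k.1 ℓ
      · exfalso
        apply hk
        rw [← hif, addX_subX_cancel h2]
      · have hz : (k.1 ℓ) * (k.1 ℓ - 1) = 0 := by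
          have hcase : k.1 ℓ = 0 ∨ k.1 ℓ = 1 := by omega
          rcases hcase with h' | h' <;> simp [h']
        have hzC : ((k.1 ℓ : ℕ) : ℂ) * ((k.1 ℓ - 1 : ℕ) : ℂ) = 0 := by
          exact_mod_cast congrArg (Nat.cast : ℕ → ℂ) hz
        linear_combination (C k * (h : ℂ)⁻¹ * (h : ℂ)⁻¹
          * ((MI.fact j : ℂ) * ((h : ℂ)⁻¹) ^ MI.deg j)) * hzC
    · rw [if_neg hif, mul_zero]
  · intro hk'
    exact absurd (mem_MIle.mpr (by rw [deg_addX]; omega)) hk'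

end QTAux

/-- Recurrence relation among the coefficients of an element of
`QT^p(K)` expanded in the scaled monomial basis centered at `(x_K,t_K)` with scale `h_K`. -/
theorem quasiTrefftz_coefficient_recurrence
    (d p : ℕ) (hd : 0 < d) (hp : 1 ≤ p)
    (K : Set (Pt d)) (hK : IsOpen K) (cK : Pt d) (hcK : cK ∈ K)
    (V : Pt d → ℝ) (hV : ContDiffOn ℝ (max (p - 2) 0 : ℕ) V K)
    (hs : ℝ) (hhs : 0 < hs)
    (C : MI d → ℂ) (q : Pt d → ℂ)
    (hrep : ∀ z : Pt d, q z = ∑ j ∈ MIle d p, C j * monoC cK hs j z)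
    (hqQT : q ∈ QTset d p V cK) :
    ∀ j : MI d, MI.deg j + 2 ≤ p →
      C (MI.addX j ⟨0, hd⟩ 2) =
        (((j.1 ⟨0, hd⟩ + 1) * (j.1 ⟨0, hd⟩ + 2) : ℕ) : ℂ)⁻¹ *
          ( -2 * Complex.I * (hs : ℂ) * ((j.2 + 1 : ℕ) : ℂ) * C (j.1, j.2 + 1)
            - ∑ ℓ ∈ Finset.univ.erase (⟨0, hd⟩ : Fin d),
                (((j.1 ℓ + 1) * (j.1 ℓ + 2) : ℕ) : ℂ) * C (MI.addX j ℓ 2)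
            + 2 * ∑ z ∈ MIbelow j,
                ((hs ^ (MI.deg j - MI.deg z + 2) : ℝ) : ℂ) / ((MI.fact (MI.sub j z) : ℕ) : ℂ)
                  * Dmi (MI.sub j z) (fun w => ((V w : ℝ) : ℂ)) cK * C z ) := by
  intro j hjp
  classical
  have hq : q = fun z => ∑ k ∈ MIle d p, C k * monoC cK hs k z := funext hrep
  have hqs : ContDiff ℝ ⊤ q := by
    rw [hq]
    exact ContDiff.sum fun k _ => contDiff_const.mul (contDiff_monoC cK hs k)
  have hdegn : MI.deg j ≤ p - 2 := by omega
  have hV2 : ContDiffOn ℝ ((p - 2 : ℕ) : ℕ) V K := by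
    have : max (p - 2) 0 = p - 2 := Nat.max_zero _
    rw [this] at hV
    exact hV
  have hVC : ContDiffOn ℝ ((p - 2 : ℕ) : ℕ) (fun w => ((V w : ℝ) : ℂ)) K :=
    Complex.ofRealCLM.contDiff.comp_contDiffOn hV2
  have hqC : ContDiffOn ℝ ((p - 2 : ℕ) : ℕ) q K := (hqs.of_le le_top).contDiffOn
  have hE := hqQT.2 j hjp
  -- split the Schrödinger operator
  have hsop : Sop V q = fun z =>
      (1 : ℂ) * (Complex.I * pd (tDir d) q z
        + (1 / 2) * ∑ ℓ : Fin d, pd (eDir d ℓ) (pd (eDir d ℓ) q) z)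
      + (-1 : ℂ) * ((V z : ℂ) * q z) := by
    funext z
    simp only [Sop]
    ring
  have hGc : ContDiffOn ℝ ((p - 2 : ℕ) : ℕ) (fun z => Complex.I * pd (tDir d) q z
      + (1 / 2) * ∑ ℓ : Fin d, pd (eDir d ℓ) (pd (eDir d ℓ) q) z) K := by
    apply ContDiff.contDiffOn
    apply ContDiff.add
    · exact contDiff_const.mul ((contDiff_pd_top hqs (tDir d)).of_le le_top)
    · refine contDiff_const.mul (ContDiff.sum fun ℓ _ => ?_)
      exact ((contDiff_pd_top (contDiff_pd_top hqs (eDir d ℓ)) (eDir d ℓ)).of_le le_top)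
  have hWc : ContDiffOn ℝ ((p - 2 : ℕ) : ℕ) (fun z => (V z : ℂ) * q z) K := hVC.mul hqC
  rw [hsop] at hE
  rw [Dmi_linear_on hK (1 : ℂ) (-1 : ℂ) hGc hWc (MI.deg j) j rfl hdegn cK hcK] at hE
  rw [Dmi_linear_on hK Complex.I ((1 : ℂ) / 2)
    ((contDiff_pd_top hqs (tDir d)).contDiffOn.of_le le_top)
    ((ContDiff.sum fun (ℓ : Fin d) (_ : ℓ ∈ Finset.univ) =>
      (contDiff_pd_top (contDiff_pd_top hqs (eDir d ℓ)) (eDir d ℓ))).contDiffOn.of_le le_top)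
    (MI.deg j) j rfl hdegn cK hcK] at hE
  -- values of the three derivative terms at the center
  have hval1 : Dmi j (pd (tDir d) q) cK
      = C (j.1, j.2 + 1) * ((j.2 + 1 : ℕ) : ℂ) * (MI.fact j : ℂ)
          * ((hs : ℂ)⁻¹) ^ (MI.deg j + 1) := by
    rw [hq]
    exact Dmi_pdt_center cK hs C j (by omega)
  have hval2 : Dmi j (fun z => ∑ ℓ : Fin d, pd (eDir d ℓ) (pd (eDir d ℓ) q) z) cK
      = ∑ ℓ : Fin d, (C (MI.addX j ℓ 2) * (((j.1 ℓ + 1) * (j.1 ℓ + 2) : ℕ) : ℂ)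
          * (MI.fact j : ℂ) * ((hs : ℂ)⁻¹) ^ (MI.deg j + 2)) := by
    rw [Dmi_finsum_on hK Finset.univ (fun ℓ => pd (eDir d ℓ) (pd (eDir d ℓ) q))
      (fun ℓ _ => ((contDiff_pd_top (contDiff_pd_top hqs (eDir d ℓ))
        (eDir d ℓ)).contDiffOn.of_le le_top)) j hdegn cK hcK]
    refine Finset.sum_congr rfl fun ℓ _ => ?_
    rw [hq]
    exact Dmi_pdpd_center cK hs C j ℓ hjp
  have hval3 : Dmi j (fun z => (V z : ℂ) * q z) cK
      = ∑ z ∈ MIbelow j, (mc j z : ℂ) * Dmi (MI.sub j z) (fun w => ((V w : ℝ) : ℂ)) cK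
          * (C z * (MI.fact z : ℂ) * ((hs : ℂ)⁻¹) ^ (MI.deg z)) := by
    rw [Dmi_leibniz hK hVC hqC (MI.deg j) j rfl hdegn cK hcK]
    refine Finset.sum_nbij' (fun z => MI.sub j z) (fun z => MI.sub j z) ?_ ?_ ?_ ?_ ?_
    · intro z _
      rw [mem_MIbelow]
      exact ⟨fun m => Nat.sub_le _ _, Nat.sub_le _ _⟩
    · intro z _
      rw [mem_MIbelow]
      exact ⟨fun m => Nat.sub_le _ _, Nat.sub_le _ _⟩
    · intro z hz
      rw [mem_MIbelow] at hz
      exact sub_sub_self_mi hz.1 hz.2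
    · intro z hz
      rw [mem_MIbelow] at hz
      exact sub_sub_self_mi hz.1 hz.2
    · intro z hz
      rw [mem_MIbelow] at hz
      rw [mc_symm hz.1 hz.2, sub_sub_self_mi hz.1 hz.2]
      congr 1
      rw [hq]
      refine Dmi_rep_center cK hs C (MI.sub j z) ?_
      refine le_trans (deg_mono (fun m => Nat.sub_le _ _) (Nat.sub_le _ _)) (by omega)
  rw [hval1, hval2, hval3] at hE
  -- nonvanishing facts
  have hH : (hs : ℂ) ≠ 0 := Complex.ofReal_ne_zero.mpr (ne_of_gt hhs)
  have hF : (MI.fact j : ℂ) ≠ 0 := Nat.cast_ne_zero.mpr (MI.fact_pos j).ne'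
  -- rewrite the two sums into factored form
  have hB2 : ∑ ℓ : Fin d, (C (MI.addX j ℓ 2) * (((j.1 ℓ + 1) * (j.1 ℓ + 2) : ℕ) : ℂ)
        * (MI.fact j : ℂ) * ((hs : ℂ)⁻¹) ^ (MI.deg j + 2))
      = (MI.fact j : ℂ) * ((hs : ℂ)⁻¹) ^ (MI.deg j + 2)
        * ∑ ℓ : Fin d, (((j.1 ℓ + 1) * (j.1 ℓ + 2) : ℕ) : ℂ) * C (MI.addX j ℓ 2) := by
    rw [Finset.mul_sum]
    exact Finset.sum_congr rfl fun ℓ _ => by ring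
  have hWT : ∑ z ∈ MIbelow j, (mc j z : ℂ) * Dmi (MI.sub j z) (fun w => ((V w : ℝ) : ℂ)) cK
        * (C z * (MI.fact z : ℂ) * ((hs : ℂ)⁻¹) ^ (MI.deg z))
      = (MI.fact j : ℂ) * ((hs : ℂ)⁻¹) ^ (MI.deg j + 2)
        * ∑ z ∈ MIbelow j,
            ((hs ^ (MI.deg j - MI.deg z + 2) : ℝ) : ℂ) / ((MI.fact (MI.sub j z) : ℕ) : ℂ)
              * Dmi (MI.sub j z) (fun w => ((V w : ℝ) : ℂ)) cK * C z := by
    rw [Finset.mul_sum]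
    refine Finset.sum_congr rfl fun z hz => ?_
    rw [mem_MIbelow] at hz
    have hdz : MI.deg z ≤ MI.deg j := deg_mono hz.1 hz.2
    have hsubc : MI.deg j - MI.deg z + 2 = MI.deg j + 2 - MI.deg z := by omega
    have hcast : ((hs ^ (MI.deg j - MI.deg z + 2) : ℝ) : ℂ)
        = (hs : ℂ) ^ (MI.deg j + 2 - MI.deg z) := by
      rw [Complex.ofReal_pow, hsubc]
    have hfk : ((MI.fact (MI.sub j z) : ℕ) : ℂ) ≠ 0 :=
      Nat.cast_ne_zero.mpr (MI.fact_pos _).ne'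
    have hFc : ((mc j z : ℕ) : ℂ) * (MI.fact z : ℂ) * (MI.fact (MI.sub j z) : ℂ)
        = (MI.fact j : ℂ) := by
      exact_mod_cast congrArg (Nat.cast : ℕ → ℂ) (mc_mul_facts hz.1 hz.2)
    have hMne : (hs : ℂ) ^ (MI.deg j + 2) ≠ 0 := pow_ne_zero _ hH
    have hpow : ((hs : ℂ)⁻¹) ^ (MI.deg j + 2) * (hs : ℂ) ^ (MI.deg j + 2 - MI.deg z)
        = ((hs : ℂ)⁻¹) ^ (MI.deg z) := by
      rw [pow_sub₀ (hs : ℂ) hH (by omega : MI.deg z ≤ MI.deg j + 2), inv_pow, inv_pow]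
      field_simp
    have hfk1 : ((MI.fact (MI.sub j z) : ℕ) : ℂ) * ((MI.fact (MI.sub j z) : ℕ) : ℂ)⁻¹ = 1 :=
      mul_inv_cancel₀ hfk
    rw [hcast, div_eq_mul_inv, ← hFc, ← hpow]
    linear_combination (-( (mc j z : ℂ) * (MI.fact z : ℂ)
      * Dmi (MI.sub j z) (fun w => ((V w : ℝ) : ℂ)) cK * C z
      * ((hs : ℂ)⁻¹) ^ (MI.deg j + 2) * (hs : ℂ) ^ (MI.deg j + 2 - MI.deg z))) * hfk1
  rw [hB2, hWT] at hE
  -- extract the core linear relation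
  have hp1 : ((hs : ℂ)⁻¹) ^ (MI.deg j + 2) * (hs : ℂ) = ((hs : ℂ)⁻¹) ^ (MI.deg j + 1) := by
    rw [show MI.deg j + 2 = (MI.deg j + 1) + 1 from rfl, pow_succ, mul_assoc,
      inv_mul_cancel₀ hH, mul_one]
  have hkey : (MI.fact j : ℂ) * ((hs : ℂ)⁻¹) ^ (MI.deg j + 2)
      * (Complex.I * (hs : ℂ) * ((j.2 + 1 : ℕ) : ℂ) * C (j.1, j.2 + 1)
        + (1 / 2) * (∑ ℓ : Fin d, (((j.1 ℓ + 1) * (j.1 ℓ + 2) : ℕ) : ℂ) * C (MI.addX j ℓ 2))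
        - ∑ z ∈ MIbelow j,
            ((hs ^ (MI.deg j - MI.deg z + 2) : ℝ) : ℂ) / ((MI.fact (MI.sub j z) : ℕ) : ℂ)
              * Dmi (MI.sub j z) (fun w => ((V w : ℝ) : ℂ)) cK * C z) = 0 := by
    linear_combination hE + ((MI.fact j : ℂ) * Complex.I * ((j.2 + 1 : ℕ) : ℂ)
      * C (j.1, j.2 + 1)) * hp1
  have hQne : ((hs : ℂ)⁻¹) ^ (MI.deg j + 2) ≠ 0 := pow_ne_zero _ (inv_ne_zero hH)
  have hinner : Complex.I * (hs : ℂ) * ((j.2 + 1 : ℕ) : ℂ) * C (j.1, j.2 + 1)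
      + (1 / 2) * (∑ ℓ : Fin d, (((j.1 ℓ + 1) * (j.1 ℓ + 2) : ℕ) : ℂ) * C (MI.addX j ℓ 2))
      - ∑ z ∈ MIbelow j,
          ((hs ^ (MI.deg j - MI.deg z + 2) : ℝ) : ℂ) / ((MI.fact (MI.sub j z) : ℕ) : ℂ)
            * Dmi (MI.sub j z) (fun w => ((V w : ℝ) : ℂ)) cK * C z = 0 := by
    rcases mul_eq_zero.mp hkey with h | h
    · rcases mul_eq_zero.mp h with h' | h'
      · exact (hF h').elim
      · exact (hQne h').elim
    · exact h
  have hSsplit := Finset.sum_erase_add Finset.univ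
    (fun ℓ => (((j.1 ℓ + 1) * (j.1 ℓ + 2) : ℕ) : ℂ) * C (MI.addX j ℓ 2))
    (Finset.mem_univ (⟨0, hd⟩ : Fin d))
  have ha : (((j.1 ⟨0, hd⟩ + 1) * (j.1 ⟨0, hd⟩ + 2) : ℕ) : ℂ) ≠ 0 :=
    Nat.cast_ne_zero.mpr (by positivity)
  rw [eq_inv_mul_iff_mul_eq₀ ha]
  linear_combination (2 : ℂ) * hinner + hSsplit

end
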